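/- arXiv:1607.06960 — 7 statements merged into one kernel-verified Lean document; each statement's English description precedes it below -/
import Mathlib

section
/- Let q ≥ 0, t₀ ∈ ℝ, and let v : [t₀ - q, ∞) → [0,∞) be differentiable on [t₀, ∞) satisfying v'(t) ≤ -α v(t) + β · sup_{s ∈ [t-q, t]} v(s) for all t ≥ t₀, where α > β > 0 are constants. Then v(t) ≤ (sup_{s ∈ [t₀-q, t₀]} v(s)) · exp(-η (t - t₀)) for all t ≥ t₀, where η is the unique positive solution of η = α - β e^{η q}. -/
open Filter Set Topology

/-- Halanay's inequality. -/
theorem halanay_inequality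
    (q t₀ α β : ℝ) (hq : 0 ≤ q) (hβ : 0 < β) (hαβ : β < α)
    (v v' : ℝ → ℝ)
    (hv_nonneg : ∀ t, t₀ - q ≤ t → 0 ≤ v t)
    (hv_cont : ContinuousOn v (Set.Ici (t₀ - q)))
    (hderiv : ∀ t, t₀ ≤ t → HasDerivWithinAt v (v' t) (Set.Ici t) t)
    (hineq : ∀ t, t₀ ≤ t →
      v' t ≤ -α * v t + β * sSup (v '' Set.Icc (t - q) t))
    (η : ℝ) (hη_pos : 0 < η) (hη : η = α - β * Real.exp (η * q)) :
    ∀ t, t₀ ≤ t →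
      v t ≤ sSup (v '' Set.Icc (t₀ - q) t₀) * Real.exp (-η * (t - t₀)) := by
  intro t ht
  set M := sSup (v '' Set.Icc (t₀ - q) t₀) with hMdef
  have hbdd : BddAbove (v '' Set.Icc (t₀ - q) t₀) :=
    (isCompact_Icc.image_of_continuousOn (hv_cont.mono Set.Icc_subset_Ici_self)).bddAbove
  have ht₀mem : t₀ ∈ Set.Icc (t₀ - q) t₀ := ⟨by linarith, le_refl _⟩
  have hMle : ∀ s ∈ Set.Icc (t₀ - q) t₀, v s ≤ M := fun s hs => le_csSup hbdd ⟨s, hs, rfl⟩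
  have hM0 : 0 ≤ M := le_trans (hv_nonneg t₀ (by linarith)) (hMle t₀ ht₀mem)
  have key : ∀ δ, 0 < δ → δ < η → ∀ u, t₀ ≤ u →
      v u ≤ (M + δ) * Real.exp (-(η - δ) * (u - t₀)) := by
    intro δ hδ0 hδη
    set μ := η - δ with hμdef
    have hμ0 : 0 < μ := by simp only [hμdef]; linarith
    set B : ℝ → ℝ := fun s => (M + δ) * Real.exp (-μ * (s - t₀)) with hBdef
    have hMδ : 0 < M + δ := by linarith
    have hBpos : ∀ s, 0 < B s := fun s => mul_pos hMδ (Real.exp_pos _)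
    have hBcont : Continuous B := by
      apply continuous_const.mul
      exact Real.continuous_exp.comp ((continuous_const.mul (continuous_id.sub continuous_const)))
    have hBderiv : ∀ s, HasDerivAt B (-μ * B s) s := by
      intro s
      have h1 : HasDerivAt (fun s : ℝ => -μ * (s - t₀)) (-μ) s := by
        simpa using ((hasDerivAt_id s).sub_const t₀).const_mul (-μ)
      have h2 := (h1.exp).const_mul (M + δ)
      refine h2.congr_deriv ?_
      simp only [hBdef]; ring
    have hcomp : -α + β * Real.exp (μ * q) + μ < 0 := by
      have h1 : Real.exp (μ * q) ≤ Real.exp (η * q) := by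
        apply Real.exp_le_exp.mpr
        apply mul_le_mul_of_nonneg_right _ hq
        linarith
      have h2 : β * Real.exp (μ * q) ≤ β * Real.exp (η * q) :=
        mul_le_mul_of_nonneg_left h1 hβ.le
      linarith [hη]
    by_contra hcon
    push_neg at hcon
    obtain ⟨u, hu₀, huB⟩ := hcon
    set A := {s : ℝ | t₀ ≤ s ∧ B s < v s} with hAdef
    have hAne : A.Nonempty := ⟨u, hu₀, huB⟩
    have hAbdd : BddBelow A := ⟨t₀, fun s hs => hs.1⟩
    set T := sInf A with hTdef
    have hT₀ : t₀ ≤ T := le_csInf hAne fun s hs => hs.1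
    have hless : ∀ s, t₀ ≤ s → s < T → v s ≤ B s := by
      intro s hs hsT
      by_contra hb
      push_neg at hb
      exact absurd (csInf_le hAbdd ⟨hs, hb⟩) (not_le.mpr hsT)
    have hBt₀ : v t₀ < B t₀ := by
      have hB0 : B t₀ = M + δ := by simp [hBdef]
      have := hMle t₀ ht₀mem
      linarith
    have hTmem : (t₀ : ℝ) - q ≤ T := by linarith
    have hle : v T ≤ B T := by
      rcases eq_or_lt_of_le hT₀ with h | h
      · rw [← h]; exact hBt₀.le
      · have hTc : T ∈ closure (Set.Ioo t₀ T) := by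
          rw [closure_Ioo h.ne]
          exact ⟨h.le, le_refl _⟩
        have hnb : (𝓝[Set.Ioo t₀ T] T).NeBot := mem_closure_iff_nhdsWithin_neBot.mp hTc
        have h1 : Filter.Tendsto v (𝓝[Set.Ioo t₀ T] T) (𝓝 (v T)) :=
          ((hv_cont T hTmem).mono (fun s hs => by
            simp only [Set.mem_Ici]
            have := hs.1
            simp only [Set.mem_Ioo] at hs
            linarith [hs.1])).tendsto
        have h2 : Filter.Tendsto B (𝓝[Set.Ioo t₀ T] T) (𝓝 (B T)) :=
          (hBcont.continuousAt.continuousWithinAt).tendsto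
        refine le_of_tendsto_of_tendsto h1 h2 ?_
        filter_upwards [eventually_mem_nhdsWithin] with s hs
        exact hless s hs.1.le hs.2
    have hclosure : T ∈ closure A := csInf_mem_closure hAne hAbdd
    have hge : B T ≤ v T := by
      have hnb : (𝓝[A] T).NeBot := mem_closure_iff_nhdsWithin_neBot.mp hclosure
      have h1 : Filter.Tendsto v (𝓝[A] T) (𝓝 (v T)) :=
        ((hv_cont T hTmem).mono (fun s hs => by
          simp only [Set.mem_Ici]; linarith [hs.1])).tendsto
      have h2 : Filter.Tendsto B (𝓝[A] T) (𝓝 (B T)) :=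
        (hBcont.continuousAt.continuousWithinAt).tendsto
      refine le_of_tendsto_of_tendsto h2 h1 ?_
      filter_upwards [eventually_mem_nhdsWithin] with s hs
      exact hs.2.le
    have hvT : v T = B T := le_antisymm hle hge
    set K := Real.exp (μ * q) * B T with hKdef
    have hKval : K = (M + δ) * Real.exp (-μ * (T - q - t₀)) := by
      simp only [hKdef, hBdef]
      rw [← mul_assoc, mul_comm (Real.exp (μ * q)) (M + δ), mul_assoc, ← Real.exp_add]
      ring_nf
    have hK0 : 0 ≤ K := (mul_pos (Real.exp_pos _) (hBpos T)).le
    have hsupK : ∀ s ∈ Set.Icc (T - q) T, v s ≤ K := by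
      intro s hs
      rcases le_or_gt s t₀ with h1 | h1
      · have hvs : v s ≤ M := hMle s ⟨by linarith [hs.1], h1⟩
        have hexp : (1 : ℝ) ≤ Real.exp (-μ * (T - q - t₀)) := by
          apply Real.one_le_exp
          nlinarith [hs.1]
        rw [hKval]
        nlinarith
      · have hvs : v s ≤ B s := by
          rcases lt_or_eq_of_le hs.2 with h2 | h2
          · exact hless s h1.le h2
          · rw [h2, hvT]
        have hBs : B s ≤ K := by
          rw [hKval]
          simp only [hBdef]
          apply mul_le_mul_of_nonneg_left _ hMδ.le
          apply Real.exp_le_exp.mpr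
          nlinarith [hs.1]
        linarith
    have hsSup : sSup (v '' Set.Icc (T - q) T) ≤ K :=
      Real.sSup_le (by rintro x ⟨s, hs, rfl⟩; exact hsupK s hs) hK0
    have hv'T : v' T ≤ -α * B T + β * K := by
      have hd := hineq T hT₀
      have h2 : β * sSup (v '' Set.Icc (T - q) T) ≤ β * K :=
        mul_le_mul_of_nonneg_left hsSup hβ.le
      rw [hvT] at hd
      linarith
    have hc : v' T - (-μ * B T) < 0 := by
      have h2 : (-α + β * Real.exp (μ * q) + μ) * B T < 0 :=
        mul_neg_of_neg_of_pos hcomp (hBpos T)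
      have h3 : K = Real.exp (μ * q) * B T := rfl
      nlinarith
    have hh : HasDerivWithinAt (fun s => v s - B s) (v' T - (-μ * B T)) (Set.Ici T) T :=
      (hderiv T hT₀).sub (hBderiv T).hasDerivWithinAt
    have hslope := hasDerivWithinAt_iff_tendsto_slope.mp hh
    have hev : ∀ᶠ z in 𝓝[Set.Ici T \ {T}] T, slope (fun s => v s - B s) T z < 0 :=
      hslope.eventually (eventually_lt_nhds hc)
    have hmono : 𝓝[Set.Ioi T] T ≤ 𝓝[Set.Ici T \ {T}] T :=
      nhdsWithin_mono T (fun z hz => ⟨Set.mem_Ici.mpr (le_of_lt hz), ne_of_gt hz⟩)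
    have hev' : ∀ᶠ z in 𝓝[Set.Ioi T] T, slope (fun s => v s - B s) T z < 0 :=
      hev.filter_mono hmono
    have hfreq : ∃ᶠ z in 𝓝[Set.Ioi T] T, 0 < v z - B z ∧ T < z := by
      rw [Filter.frequently_iff]
      intro U hU
      rcases mem_nhdsGT_iff_exists_Ioo_subset.mp hU with ⟨w, hw, hsub⟩
      obtain ⟨a, haA, haw⟩ := (csInf_lt_iff hAbdd hAne).mp (show sInf A < w from hw)
      have haT : T ≤ a := csInf_le hAbdd haA
      have haT' : T < a := by
        rcases lt_or_eq_of_le haT with h | h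
        · exact h
        · exfalso; rw [← h] at haA; exact absurd haA.2 (not_lt.mpr hle)
      exact ⟨a, hsub ⟨haT', haw⟩, sub_pos.mpr haA.2, haT'⟩
    obtain ⟨z, ⟨hz1, hz2⟩, hz3⟩ := (hfreq.and_eventually hev').exists
    rw [slope_def_field] at hz3
    have h0 : v T - B T = 0 := by rw [hvT]; ring
    rw [h0, sub_zero] at hz3
    have : 0 < (v z - B z) / (z - T) := div_pos hz1 (sub_pos.mpr hz2)
    linarith
  have hlim : Filter.Tendsto (fun δ : ℝ => (M + δ) * Real.exp (-(η - δ) * (t - t₀)))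
      (𝓝[>] (0 : ℝ)) (𝓝 (M * Real.exp (-η * (t - t₀)))) := by
    have hc : ContinuousAt (fun δ : ℝ => (M + δ) * Real.exp (-(η - δ) * (t - t₀))) 0 := by
      apply ContinuousAt.mul
      · exact (continuous_const.add continuous_id).continuousAt
      · exact (Real.continuous_exp.comp (((continuous_const.sub continuous_id).neg).mul continuous_const)).continuousAt
    have := hc.tendsto.mono_left (nhdsWithin_le_nhds (s := Set.Ioi (0:ℝ)))
    convert this using 2
    norm_num
  refine ge_of_tendsto hlim ?_
  filter_upwards [Ioo_mem_nhdsGT_of_mem ⟨le_refl (0:ℝ), hη_pos⟩] with δ hδ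
  exact key δ hδ.1 hδ.2 t ht
end

section
/- Let σ > K > 0 and q > 0, and let μ : [t₀-q, ∞) → [0,∞) be defined by μ(t) = 1 for t₀-q ≤ t ≤ t₀ and μ(t) = e^{-σ(t-t₀)} + ∫_{t₀}^{t} e^{-σ(t-s)} K (sup_{u∈[s-q,s]} w(u)) ds for t ≥ t₀, where w is continuous, nonnegative, and w(t) ≤ μ(t) for all t ≥ t₀-q. Then μ is differentiable on (t₀,∞) and satisfies μ'(t) ≤ -σ μ(t) + K sup_{u∈[t-q,t]} μ(u) for all t ≥ t₀. -/
open Set intervalIntegral MeasureTheory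

/-- one-sided comparison of window sups -/
lemma window_sup_le {q t₀ : ℝ} (hq : 0 < q) {w : ℝ → ℝ}
    (hw : ContinuousOn w (Set.Ici (t₀ - q)))
    {K : Set ℝ} (hK : IsCompact K) (hKsub : K ⊆ Set.Ici (t₀ - q))
    {ε δ : ℝ}
    (H : ∀ x ∈ K, ∀ y ∈ K, dist x y < δ → dist (w x) (w y) < ε)
    {s s' : ℝ} (hs : t₀ ≤ s) (hs' : t₀ ≤ s')
    (hsK : Set.Icc (s - q) s ⊆ K) (hs'K : Set.Icc (s' - q) s' ⊆ K)
    (hd : |s - s'| < δ) :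
    sSup (w '' Set.Icc (s - q) s) ≤ sSup (w '' Set.Icc (s' - q) s') + ε := by
  have hne' : (Set.Icc (s' - q) s').Nonempty := Set.nonempty_Icc.2 (by linarith)
  have hbdd' : BddAbove (w '' Set.Icc (s' - q) s') :=
    (isCompact_Icc.image_of_continuousOn (hw.mono (hs'K.trans hKsub))).bddAbove
  apply csSup_le ((Set.nonempty_Icc.2 (by linarith)).image _)
  rintro x ⟨u, hu, rfl⟩
  set u' := min (max u (s' - q)) s' with hu'def
  have hu'mem : u' ∈ Set.Icc (s' - q) s' := by
    constructor
    · exact le_min (le_max_right _ _) (by linarith)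
    · exact min_le_right _ _
  have hdist : dist u u' < δ := by
    rw [Real.dist_eq]
    rcases hu with ⟨hu1, hu2⟩
    rw [abs_lt] at hd ⊢
    rcases lt_trichotomy u (s' - q) with h | h | h
    · have h1 : u' = s' - q := by
        rw [hu'def, max_eq_right h.le, min_eq_left (by linarith)]
      rw [h1]; constructor <;> linarith
    · have h1 : u' = u := by
        rw [hu'def, max_eq_left h.ge, min_eq_left (by linarith)]
      rw [h1]; constructor <;> linarith
    · rcases le_or_gt u s' with h2 | h2
      · have h1 : u' = u := by
          rw [hu'def, max_eq_left h.le, min_eq_left h2]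
        rw [h1]; constructor <;> linarith
      · have h1 : u' = s' := by
          rw [hu'def, max_eq_left h.le, min_eq_right h2.le]
        rw [h1]; constructor <;> linarith
  have hwle : w u < w u' + ε := by
    have := H u (hsK hu) u' (hs'K hu'mem) hdist
    rw [Real.dist_eq, abs_lt] at this
    linarith [this.1]
  exact le_of_lt (lt_of_lt_of_le hwle (by
    have : w u' ≤ sSup (w '' Set.Icc (s' - q) s') :=
      le_csSup hbdd' (Set.mem_image_of_mem _ hu'mem)
    linarith))

lemma window_sup_continuousOn {q t₀ : ℝ} (hq : 0 < q) {w : ℝ → ℝ}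
    (hw : ContinuousOn w (Set.Ici (t₀ - q))) :
    ContinuousOn (fun s => sSup (w '' Set.Icc (s - q) s)) (Set.Ici t₀) := by
  intro s₀ hs₀
  rw [Metric.continuousWithinAt_iff]
  intro ε hε
  set Kc := Set.Icc (t₀ - q) (s₀ + 1) with hKc
  have hKcomp : IsCompact Kc := isCompact_Icc
  have hKsub : Kc ⊆ Set.Ici (t₀ - q) := fun x hx => hx.1
  have huc := hKcomp.uniformContinuousOn_of_continuous (hw.mono hKsub)
  rw [Metric.uniformContinuousOn_iff] at huc
  obtain ⟨δ, hδ, H⟩ := huc (ε / 2) (by linarith)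
  refine ⟨min δ 1, by positivity, ?_⟩
  intro s hs hdist
  have hdd : dist s s₀ < δ := lt_of_lt_of_le hdist (min_le_left _ _)
  have hd1 : dist s s₀ < 1 := lt_of_lt_of_le hdist (min_le_right _ _)
  rw [Real.dist_eq] at hdd hd1
  have hsK : Set.Icc (s - q) s ⊆ Kc := by
    intro x hx
    have h1 : |s - s₀| < 1 := hd1
    rw [abs_lt] at h1
    exact ⟨by simp at hs; rcases hx with ⟨a,b⟩; linarith [hs], by rcases hx with ⟨a,b⟩; linarith [h1.2]⟩
  have hs0K : Set.Icc (s₀ - q) s₀ ⊆ Kc := by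
    intro x hx
    exact ⟨by rcases hx with ⟨a,b⟩; simp at hs₀; linarith, by rcases hx with ⟨a,b⟩; linarith⟩
  have h1 := window_sup_le hq hw hKcomp hKsub H hs hs₀ hsK hs0K hdd
  have h2 := window_sup_le hq hw hKcomp hKsub H hs₀ hs hs0K hsK (by rw [abs_sub_comm]; exact hdd)
  rw [Real.dist_eq, abs_lt]
  constructor <;> linarith

/-- The auxiliary majorant in the proof of the integral Halanay inequality
satisfies the differential Halanay inequality. -/
theorem halanay_majorant_deriv
    (σ K q t₀ : ℝ) (hK : 0 < K) (hσK : K < σ) (hq : 0 < q)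
    (w μ : ℝ → ℝ)
    (hw_cont : ContinuousOn w (Set.Ici (t₀ - q)))
    (hw_nonneg : ∀ t, t₀ - q ≤ t → 0 ≤ w t)
    (hwμ : ∀ t, t₀ - q ≤ t → w t ≤ μ t)
    (hμ1 : ∀ t, t₀ - q ≤ t → t ≤ t₀ → μ t = 1)
    (hμ2 : ∀ t, t₀ ≤ t →
      μ t = Real.exp (-σ * (t - t₀))
        + ∫ s in t₀..t, Real.exp (-σ * (t - s)) * K * sSup (w '' Set.Icc (s - q) s)) :
    (∀ t ∈ Set.Ioi t₀, DifferentiableAt ℝ μ t) ∧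
      ∀ t, t₀ ≤ t →
        derivWithin μ (Set.Ici t₀) t ≤ -σ * μ t + K * sSup (μ '' Set.Icc (t - q) t) := by
  have hg : ContinuousOn (fun s => sSup (w '' Set.Icc (s - q) s)) (Set.Ici t₀) :=
    window_sup_continuousOn hq hw_cont
  set g : ℝ → ℝ := fun s => sSup (w '' Set.Icc (s - q) s) with hgdef
  set h : ℝ → ℝ := fun s => Real.exp (σ * s) * (K * g s) with hhdef
  set C : ℝ := Real.exp (σ * t₀) with hCdef
  set F : ℝ → ℝ := fun u => ∫ s in t₀..u, h s with hFdef
  set φ : ℝ → ℝ := fun u => Real.exp (-σ * u) * (C + F u) with hφdef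
  have hh : ContinuousOn h (Set.Ici t₀) := by
    apply ContinuousOn.mul _ (continuousOn_const.mul hg)
    exact (Real.continuous_exp.comp (continuous_const.mul continuous_id)).continuousOn
  -- μ = φ on Ici t₀
  have hμφ : ∀ t, t₀ ≤ t → μ t = φ t := by
    intro t ht
    rw [hμ2 t ht, hφdef]
    simp only [mul_add, hFdef, hCdef]
    rw [← intervalIntegral.integral_const_mul]
    congr 1
    · rw [← Real.exp_add]; ring_nf
    · apply intervalIntegral.integral_congr
      intro s _
      simp only [hhdef]
      rw [show Real.exp (-σ * t) * (Real.exp (σ * s) * (K * g s))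
            = (Real.exp (-σ * t) * Real.exp (σ * s)) * K * g s by ring,
          ← Real.exp_add]
      ring_nf
      rfl
  have key : ∀ t, t₀ ≤ t →
      HasDerivWithinAt μ (-σ * μ t + K * g t) (Set.Ici t₀) t
        ∧ (t₀ < t → HasDerivAt μ (-σ * μ t + K * g t) t) := by
    intro t ht
    have hint : IntervalIntegrable h volume t₀ t := by
      apply ContinuousOn.intervalIntegrable
      apply hh.mono
      rw [Set.uIcc_of_le ht]
      exact Set.Icc_subset_Ici_self
    have d1 : HasDerivAt (fun u => Real.exp (-σ * u)) (Real.exp (-σ * t) * (-σ)) t := by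
      have := ((hasDerivAt_id t).const_mul (-σ)).exp
      simpa using this
    have hval : Real.exp (-σ * t) * (-σ) * (C + F t) + Real.exp (-σ * t) * h t
        = -σ * μ t + K * g t := by
      rw [hμφ t ht, hφdef, hhdef]
      have hEE : Real.exp (-σ * t) * Real.exp (σ * t) = 1 := by
        rw [← Real.exp_add]; ring_nf; exact Real.exp_zero
      simp only
      linear_combination (K * g t) * hEE
    constructor
    · rcases eq_or_lt_of_le ht with rfl | ht'
      · have hmeas : StronglyMeasurableAtFilter h (nhdsWithin t₀ (Set.Ioi t₀)) volume :=
          (hh.mono Set.Ioi_subset_Ici_self).stronglyMeasurableAtFilter_nhdsWithin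
            measurableSet_Ioi t₀
        have hF : HasDerivWithinAt F (h t₀) (Set.Ici t₀) t₀ :=
          intervalIntegral.integral_hasDerivWithinAt_right hint hmeas
            ((hh t₀ Set.self_mem_Ici).mono Set.Ioi_subset_Ici_self)
        have dφ : HasDerivWithinAt φ
            (Real.exp (-σ * t₀) * (-σ) * (C + F t₀) + Real.exp (-σ * t₀) * h t₀)
            (Set.Ici t₀) t₀ := d1.hasDerivWithinAt.mul (hF.const_add C)
        rw [hval] at dφ
        exact dφ.congr (fun y hy => hμφ y hy) (hμφ t₀ le_rfl)
      · have hnhds : Set.Ici t₀ ∈ nhds t := Ici_mem_nhds ht'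
        have hca : ContinuousAt h t := hh.continuousAt hnhds
        have hmeas' : StronglyMeasurableAtFilter h (nhds t) volume :=
          ⟨Set.Ici t₀, hnhds, hh.aestronglyMeasurable measurableSet_Ici⟩
        have hF : HasDerivAt F (h t) t :=
          intervalIntegral.integral_hasDerivAt_right hint hmeas' hca
        have dφ : HasDerivAt φ
            (Real.exp (-σ * t) * (-σ) * (C + F t) + Real.exp (-σ * t) * h t) t :=
          d1.mul (hF.const_add C)
        rw [hval] at dφ
        have heq : μ =ᶠ[nhds t] φ :=
          Filter.eventuallyEq_of_mem hnhds (fun y hy => hμφ y hy)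
        exact (dφ.congr_of_eventuallyEq heq).hasDerivWithinAt
    · intro ht'
      have hnhds : Set.Ici t₀ ∈ nhds t := Ici_mem_nhds ht'
      have hca : ContinuousAt h t := hh.continuousAt hnhds
      have hmeas' : StronglyMeasurableAtFilter h (nhds t) volume :=
        ⟨Set.Ici t₀, hnhds, hh.aestronglyMeasurable measurableSet_Ici⟩
      have hF : HasDerivAt F (h t) t :=
        intervalIntegral.integral_hasDerivAt_right hint hmeas' hca
      have dφ : HasDerivAt φ
          (Real.exp (-σ * t) * (-σ) * (C + F t) + Real.exp (-σ * t) * h t) t :=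
        d1.mul (hF.const_add C)
      rw [hval] at dφ
      have heq : μ =ᶠ[nhds t] φ :=
        Filter.eventuallyEq_of_mem hnhds (fun y hy => hμφ y hy)
      exact dφ.congr_of_eventuallyEq heq
  -- continuity of μ on Ici (t₀ - q)
  have Cμ2 : ContinuousOn μ (Set.Ici t₀) := fun t ht =>
    ((key t ht).1).continuousWithinAt
  have Cμ1 : ContinuousOn μ (Set.Icc (t₀ - q) t₀) :=
    continuousOn_const.congr (fun x hx => hμ1 x hx.1 hx.2)
  have Cμ : ContinuousOn μ (Set.Ici (t₀ - q)) := by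
    intro x hx
    have h1 : ContinuousWithinAt μ (Set.Icc (t₀ - q) t₀) x := by
      rcases le_or_gt x t₀ with hc | hc
      · exact Cμ1 x ⟨hx, hc⟩
      · apply continuousWithinAt_of_notMem_closure
        rw [isClosed_Icc.closure_eq]
        exact fun hco => absurd hco.2 (not_le.2 hc)
    have h2 : ContinuousWithinAt μ (Set.Ici t₀) x := by
      rcases le_or_gt t₀ x with hc | hc
      · exact Cμ2 x hc
      · apply continuousWithinAt_of_notMem_closure
        rw [isClosed_Ici.closure_eq]
        exact not_le.2 hc
    exact (h1.union h2).mono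
      (fun y hy => (le_or_gt y t₀).elim (fun hl => Or.inl ⟨hy, hl⟩) (fun hl => Or.inr hl.le))
  constructor
  · intro t ht
    exact ((key t (le_of_lt ht)).2 ht).differentiableAt
  · intro t ht
    rw [((key t ht).1).derivWithin (uniqueDiffOn_Ici t₀ t ht)]
    have hbdd : BddAbove (μ '' Set.Icc (t - q) t) := by
      apply (isCompact_Icc.image_of_continuousOn (Cμ.mono _)).bddAbove
      intro y hy
      simp only [Set.mem_Ici]
      have := hy.1
      simp at this ⊢
      linarith [this]
    have hgle : g t ≤ sSup (μ '' Set.Icc (t - q) t) := by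
      apply csSup_le ((Set.nonempty_Icc.2 (by linarith)).image _)
      rintro x ⟨u, hu, rfl⟩
      have h1 : t₀ - q ≤ u := by linarith [hu.1]
      exact le_trans (hwμ u h1) (le_csSup hbdd (Set.mem_image_of_mem _ hu))
    have := mul_le_mul_of_nonneg_left hgle hK.le
    linarith
end

section
/- Let h > 0 and let r : [0,∞) → [0,q] with q ≥ h. Define γ_h(t,r) as above. Then for all t ≥ 0, t - 3q - w_r(q) ≤ γ_h(t, r) ≤ t, where w_r(q) = sup { |r(t₂)-r(t₁)| : 0 ≤ t₁,t₂, |t₂-t₁| ≤ q }. In particular, if t ≥ 3q + w_r(q) then γ_h(t, r) ≥ 0. -/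
/-- The piecewise constant deviated argument -/
noncomputable def gammaPCA (h : ℝ) (r : ℝ → ℝ) (t : ℝ) : ℝ :=
  (⌊t / h - (⌊r ((⌊t / h⌋ : ℝ) * h) / h⌋ : ℝ)⌋ : ℝ) * h

/-- t - 3q - w_r(q) ≤ γ_h(t,r) ≤ t for all t ≥ 0; in particular γ_h(t,r) ≥ 0
for t ≥ 3q + w_r(q). -/
theorem gammaPCA_bounds
    (h q : ℝ) (hh : 0 < h) (hhq : h ≤ q) (r : ℝ → ℝ)
    (hr : ∀ t, 0 ≤ t → r t ∈ Set.Icc 0 q) :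
    ∀ t, 0 ≤ t →
      (t - 3 * q - sSup {d : ℝ | ∃ t₁ t₂ : ℝ, 0 ≤ t₁ ∧ 0 ≤ t₂ ∧
          |t₂ - t₁| ≤ q ∧ d = |r t₂ - r t₁|} ≤ gammaPCA h r t
        ∧ gammaPCA h r t ≤ t)
      ∧ (3 * q + sSup {d : ℝ | ∃ t₁ t₂ : ℝ, 0 ≤ t₁ ∧ 0 ≤ t₂ ∧
          |t₂ - t₁| ≤ q ∧ d = |r t₂ - r t₁|} ≤ t → 0 ≤ gammaPCA h r t) := by
  intro t ht
  set S : Set ℝ := {d : ℝ | ∃ t₁ t₂ : ℝ, 0 ≤ t₁ ∧ 0 ≤ t₂ ∧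
      |t₂ - t₁| ≤ q ∧ d = |r t₂ - r t₁|} with hS
  have hq0 : (0:ℝ) < q := lt_of_lt_of_le hh hhq
  have hmem0 : (0:ℝ) ∈ S := ⟨0, 0, le_refl 0, le_refl 0, by simpa using hq0.le, by simp⟩
  have hbdd : BddAbove S := by
    refine ⟨q, ?_⟩
    rintro d ⟨t₁, t₂, h1, h2, _, rfl⟩
    have r1 := hr t₁ h1
    have r2 := hr t₂ h2
    rw [abs_sub_le_iff]
    constructor <;> linarith [r1.1, r1.2, r2.1, r2.2]
  have hw0 : (0:ℝ) ≤ sSup S := le_csSup hbdd hmem0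
  -- setup
  set i := ⌊t / h⌋ with hi
  have hth : 0 ≤ t / h := div_nonneg ht hh.le
  have hi0 : 0 ≤ i := Int.floor_nonneg.mpr hth
  have hs0 : (0:ℝ) ≤ (i:ℝ) * h := mul_nonneg (by exact_mod_cast hi0) hh.le
  set k := ⌊r ((i:ℝ) * h) / h⌋ with hk
  have hrs := hr ((i:ℝ) * h) hs0
  have hk0 : 0 ≤ k := Int.floor_nonneg.mpr (div_nonneg hrs.1 hh.le)
  have hkh : (k:ℝ) * h ≤ r ((i:ℝ) * h) := by
    have := Int.floor_le (r ((i:ℝ) * h) / h)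
    calc (k:ℝ) * h ≤ (r ((i:ℝ) * h) / h) * h := by nlinarith
    _ = r ((i:ℝ) * h) := div_mul_cancel₀ _ hh.ne'
  have hgamma : gammaPCA h r t = ((i - k : ℤ) : ℝ) * h := by
    unfold gammaPCA
    rw [← hi, ← hk, Int.floor_sub_intCast]
  have hih : (i:ℝ) * h ≤ t := by
    have := Int.floor_le (t / h)
    calc (i:ℝ) * h ≤ (t/h) * h := by nlinarith
    _ = t := div_mul_cancel₀ _ hh.ne'
  have hih2 : t - h ≤ (i:ℝ) * h := by
    have h1 : t / h < (i:ℝ) + 1 := by exact_mod_cast Int.lt_floor_add_one (t / h)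
    have := (div_lt_iff₀ hh).mp h1
    linarith
  have hupper : gammaPCA h r t ≤ t := by
    rw [hgamma]
    push_cast
    have : (0:ℝ) ≤ (k:ℝ) * h := mul_nonneg (by exact_mod_cast hk0) hh.le
    nlinarith
  have hlower : t - 2 * q ≤ gammaPCA h r t := by
    rw [hgamma]
    push_cast
    have hrq : r ((i:ℝ) * h) ≤ q := hrs.2
    nlinarith
  refine ⟨⟨by linarith, hupper⟩, fun hle => by linarith⟩
end

section
/- Let T > 0, let a : [0,T] → [0,∞) and r : [0,T] → [0,q] be continuous, let x be the solution of x'(t) = -a(t) x(t - r(t)) with x(t) = φ(t) on [-q, 0] (φ ∈ C([-q,0],ℝ)), and let z_h be the solution of z_h'(t) = -a(t) z_h(γ_h(t,r)) with the same initial data at nodes. Then for all t ∈ [0,T]: |x(t) - z_h(t)| ≤ (e^{∫_0^T a(s) ds} ∫_0^T a(s) ds) · w_x(w_r(h;T) + 2h; T), where w_r(h;T) is the modulus of continuity of r at scale h on [0,T] and w_x(δ;T) = sup { |x(t₂)-x(t₁)| : -q ≤ t₁,t₂ ≤ T, |t₂-t₁| ≤ δ }. -/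
open Set MeasureTheory intervalIntegral

set_option maxHeartbeats 2000000 in
/-- Error estimate over a compact interval [0,T] (Theorem 3.2). -/
theorem compact_interval_error_estimate
    (T q h : ℝ) (hT : 0 < T) (hq : 0 < q) (hh : 0 < h) (hhq : h ≤ q)
    (k : ℕ) (hk : (k : ℝ) * h = q)
    (a : ℝ → ℝ) (ha_cont : ContinuousOn a (Set.Icc 0 T))
    (ha_nonneg : ∀ t ∈ Set.Icc (0 : ℝ) T, 0 ≤ a t)
    (r : ℝ → ℝ) (hr_cont : ContinuousOn r (Set.Icc 0 T))
    (hr : ∀ t ∈ Set.Icc (0 : ℝ) T, r t ∈ Set.Icc 0 q)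
    (φ : ℝ → ℝ) (hφ : ContinuousOn φ (Set.Icc (-q) 0))
    (x : ℝ → ℝ)
    (hx_cont : ContinuousOn x (Set.Icc (-q) T))
    (hx_init : ∀ t ∈ Set.Icc (-q) (0 : ℝ), x t = φ t)
    (hx_deriv : ∀ t ∈ Set.Icc (0 : ℝ) T,
      HasDerivWithinAt x (-(a t) * x (t - r t)) (Set.Ici t) t)
    (z : ℝ → ℝ)
    (hz_cont : ContinuousOn z (Set.Ici 0))
    (hz_init : ∀ n : ℤ, -(k : ℤ) ≤ n → n ≤ 0 → z ((n : ℝ) * h) = φ ((n : ℝ) * h))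
    (hz_deriv : ∀ t ∈ Set.Ico (0 : ℝ) T,
      HasDerivWithinAt z (-(a t) * z (gammaPCA h r t)) (Set.Ici t) t) :
    ∀ t ∈ Set.Icc (0 : ℝ) T,
      |x t - z t| ≤
        (Real.exp (∫ s in (0:ℝ)..T, a s) * ∫ s in (0:ℝ)..T, a s) *
          sSup {d : ℝ | ∃ t₁ t₂ : ℝ, -q ≤ t₁ ∧ t₁ ≤ T ∧ -q ≤ t₂ ∧ t₂ ≤ T ∧
            |t₂ - t₁| ≤
              (sSup {e : ℝ | ∃ s₁ s₂ : ℝ, 0 ≤ s₁ ∧ s₁ ≤ T ∧ 0 ≤ s₂ ∧ s₂ ≤ T ∧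
                |s₂ - s₁| ≤ h ∧ e = |r s₂ - r s₁|}) + 2 * h ∧
            d = |x t₂ - x t₁|} := by
  have hqT : -q ≤ T := by linarith
  have hq0 : -q ≤ (0:ℝ) := by linarith
  set wr := sSup {e : ℝ | ∃ s₁ s₂ : ℝ, 0 ≤ s₁ ∧ s₁ ≤ T ∧ 0 ≤ s₂ ∧ s₂ ≤ T ∧
                |s₂ - s₁| ≤ h ∧ e = |r s₂ - r s₁|} with hwr_def
  set wx := sSup {d : ℝ | ∃ t₁ t₂ : ℝ, -q ≤ t₁ ∧ t₁ ≤ T ∧ -q ≤ t₂ ∧ t₂ ≤ T ∧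
            |t₂ - t₁| ≤ wr + 2 * h ∧ d = |x t₂ - x t₁|} with hwx_def
  -- bounds for r, x, z on compacts
  obtain ⟨Mr, hMr⟩ : ∃ C, ∀ s ∈ Icc (0:ℝ) T, ‖r s‖ ≤ C :=
    isCompact_Icc.exists_bound_of_continuousOn hr_cont
  obtain ⟨Mx, hMx⟩ : ∃ C, ∀ s ∈ Icc (-q) T, ‖x s‖ ≤ C :=
    isCompact_Icc.exists_bound_of_continuousOn hx_cont
  obtain ⟨Mz, hMz⟩ : ∃ C, ∀ s ∈ Icc (0:ℝ) T, ‖z s‖ ≤ C :=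
    isCompact_Icc.exists_bound_of_continuousOn (hz_cont.mono (fun u hu => hu.1))
  -- wr facts
  have hwrS_bdd : BddAbove {e : ℝ | ∃ s₁ s₂ : ℝ, 0 ≤ s₁ ∧ s₁ ≤ T ∧ 0 ≤ s₂ ∧ s₂ ≤ T ∧
                |s₂ - s₁| ≤ h ∧ e = |r s₂ - r s₁|} := by
    refine ⟨Mr + Mr, ?_⟩
    rintro e ⟨s₁, s₂, h1, h2, h3, h4, _, rfl⟩
    have := hMr s₁ ⟨h1, h2⟩
    have := hMr s₂ ⟨h3, h4⟩
    calc |r s₂ - r s₁| ≤ |r s₂| + |r s₁| := abs_sub _ _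
      _ ≤ Mr + Mr := by simp only [Real.norm_eq_abs] at *; linarith
  have hwr_le : ∀ s₁ s₂ : ℝ, s₁ ∈ Icc 0 T → s₂ ∈ Icc 0 T → |s₂ - s₁| ≤ h →
      |r s₂ - r s₁| ≤ wr := by
    intro s₁ s₂ h1 h2 h3
    exact le_csSup hwrS_bdd ⟨s₁, s₂, h1.1, h1.2, h2.1, h2.2, h3, rfl⟩
  have hwr_nonneg : 0 ≤ wr := by
    have := hwr_le 0 0 ⟨le_rfl, hT.le⟩ ⟨le_rfl, hT.le⟩ (by simp [hh.le])
    simpa using this.trans' (abs_nonneg _)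
  -- wx facts
  have hwxS_bdd : BddAbove {d : ℝ | ∃ t₁ t₂ : ℝ, -q ≤ t₁ ∧ t₁ ≤ T ∧ -q ≤ t₂ ∧ t₂ ≤ T ∧
            |t₂ - t₁| ≤ wr + 2 * h ∧ d = |x t₂ - x t₁|} := by
    refine ⟨Mx + Mx, ?_⟩
    rintro d ⟨t₁, t₂, h1, h2, h3, h4, _, rfl⟩
    have := hMx t₁ ⟨h1, h2⟩
    have := hMx t₂ ⟨h3, h4⟩
    calc |x t₂ - x t₁| ≤ |x t₂| + |x t₁| := abs_sub _ _
      _ ≤ Mx + Mx := by simp only [Real.norm_eq_abs] at *; linarith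
  have hwx_le : ∀ t₁ t₂ : ℝ, t₁ ∈ Icc (-q) T → t₂ ∈ Icc (-q) T → |t₂ - t₁| ≤ wr + 2 * h →
      |x t₂ - x t₁| ≤ wx := by
    intro t₁ t₂ h1 h2 h3
    exact le_csSup hwxS_bdd ⟨t₁, t₂, h1.1, h1.2, h2.1, h2.2, h3, rfl⟩
  have hwx_nonneg : 0 ≤ wx := by
    have := hwx_le 0 0 ⟨hq0, hT.le⟩ ⟨hq0, hT.le⟩ (by simp; linarith)
    simpa using this.trans' (abs_nonneg _)
  -- clamped version of a
  set a' : ℝ → ℝ := fun s => a (max 0 (min s T)) with ha'_def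
  have hmem' : ∀ s : ℝ, max 0 (min s T) ∈ Icc (0:ℝ) T :=
    fun s => ⟨le_max_left _ _, max_le hT.le (min_le_right _ _)⟩
  have ha'_cont : Continuous a' :=
    ha_cont.comp_continuous (continuous_const.max (continuous_id.min continuous_const)) hmem'
  have ha'_eq : ∀ s ∈ Icc (0:ℝ) T, a' s = a s := by
    intro s hs
    simp only [ha'_def, min_eq_left hs.2, max_eq_right hs.1]
  have ha'_nonneg : ∀ s, 0 ≤ a' s := fun s => ha_nonneg _ (hmem' s)
  -- the primitive F
  set F : ℝ → ℝ := fun u => ∫ s in (0:ℝ)..u, a' s with hF_def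
  have hFd : ∀ u : ℝ, HasDerivAt F (a' u) u := by
    intro u
    exact (ha'_cont.integral_hasStrictDerivAt 0 u).hasDerivAt
  have hFcont : Continuous F := by
    rw [continuous_iff_continuousAt]; exact fun u => (hFd u).continuousAt
  have hFmono : Monotone F := by
    intro u v huv
    have hsub : F v - F u = ∫ s in u..v, a' s := by
      rw [hF_def]
      exact (intervalIntegral.integral_interval_sub_left (ha'_cont.intervalIntegrable 0 v)
        (ha'_cont.intervalIntegrable 0 u))
    have hge : 0 ≤ ∫ s in u..v, a' s :=
      intervalIntegral.integral_nonneg huv (fun s _ => ha'_nonneg s)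
    linarith
  have hF0 : F 0 = 0 := intervalIntegral.integral_same
  have hFA : F T = ∫ s in (0:ℝ)..T, a s :=
    intervalIntegral.integral_congr (fun s hs => ha'_eq s (by rwa [uIcc_of_le hT.le] at hs))
  -- gamma facts
  have hγ_eq : ∀ s : ℝ, gammaPCA h r s =
      ((⌊s / h⌋ : ℝ) - (⌊r ((⌊s / h⌋ : ℝ) * h) / h⌋ : ℝ)) * h := by
    intro s
    unfold gammaPCA
    rw [Int.floor_sub_intCast]
    push_cast
    ring
  have hγ_facts : ∀ s ∈ Icc (0:ℝ) T, gammaPCA h r s ∈ Icc (-q) s ∧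
      |s - r s - gammaPCA h r s| ≤ wr + 2 * h ∧
      (gammaPCA h r s < 0 → z (gammaPCA h r s) = x (gammaPCA h r s)) := by
    intro s hs
    set n : ℤ := ⌊s / h⌋ with hn_def
    set u : ℝ := (n : ℝ) * h with hu_def
    set m : ℤ := ⌊r u / h⌋ with hm_def
    have hn0 : 0 ≤ n := Int.floor_nonneg.2 (div_nonneg hs.1 hh.le)
    have hn0' : (0:ℝ) ≤ (n:ℝ) := by exact_mod_cast hn0
    have hus : u ≤ s := by
      have h1 : (n:ℝ) ≤ s / h := Int.floor_le (s / h)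
      calc u = (n:ℝ) * h := rfl
        _ ≤ (s / h) * h := by nlinarith
        _ = s := by field_simp
    have hsu : s < u + h := by
      have h1 : s / h < (n:ℝ) + 1 := Int.lt_floor_add_one (s / h)
      have h2 : s < ((n:ℝ) + 1) * h := by
        calc s = (s / h) * h := by field_simp
          _ < ((n:ℝ) + 1) * h := by nlinarith
      simp only [hu_def]; nlinarith
    have hu_mem : u ∈ Icc (0:ℝ) T := ⟨by positivity, hus.trans hs.2⟩
    have hru := hr u hu_mem
    have hm0 : 0 ≤ m := Int.floor_nonneg.2 (div_nonneg hru.1 hh.le)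
    have hm0' : (0:ℝ) ≤ (m:ℝ) := by exact_mod_cast hm0
    have hmk : (m : ℝ) * h ≤ q := by
      have h1 : (m : ℝ) ≤ r u / h := Int.floor_le _
      have h2 : r u ≤ q := hru.2
      have h3 : (m:ℝ) * h ≤ (r u / h) * h := by nlinarith
      have h4 : (r u / h) * h = r u := by field_simp
      linarith
    have hmlow : (m : ℝ) * h ≤ r u := by
      have h1 : (m : ℝ) ≤ r u / h := Int.floor_le _
      have h3 : (m:ℝ) * h ≤ (r u / h) * h := by nlinarith
      have h4 : (r u / h) * h = r u := by field_simp
      linarith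
    have hmhigh : r u < (m : ℝ) * h + h := by
      have h1 : r u / h < (m:ℝ) + 1 := Int.lt_floor_add_one _
      have h2 : r u = (r u / h) * h := by field_simp
      nlinarith
    have hγ : gammaPCA h r s = ((n:ℝ) - (m:ℝ)) * h := hγ_eq s
    have hγ_le : gammaPCA h r s ≤ s := by
      rw [hγ]
      nlinarith
    have hγ_ge : -q ≤ gammaPCA h r s := by
      rw [hγ]
      nlinarith
    refine ⟨⟨hγ_ge, hγ_le⟩, ?_, ?_⟩
    · -- distance estimate
      have hrr : |r u - r s| ≤ wr := by
        have habs : |u - s| ≤ h := by rw [abs_le]; constructor <;> linarith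
        exact hwr_le s u hs hu_mem habs
      have hdecomp : s - r s - gammaPCA h r s = (s - u) + ((m:ℝ) * h - r u) + (r u - r s) := by
        rw [hγ]; simp only [hu_def]; ring
      rw [hdecomp]
      calc |(s - u) + ((m:ℝ) * h - r u) + (r u - r s)|
          ≤ |(s - u) + ((m:ℝ) * h - r u)| + |r u - r s| := abs_add_le _ _
        _ ≤ |s - u| + |(m:ℝ) * h - r u| + |r u - r s| := by
            linarith [abs_add_le (s - u) ((m:ℝ) * h - r u)]
        _ ≤ h + h + wr := by
            have h1 : |s - u| ≤ h := by rw [abs_le]; constructor <;> linarith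
            have h2 : |(m:ℝ) * h - r u| ≤ h := by rw [abs_le]; constructor <;> linarith
            linarith
        _ = wr + 2 * h := by ring
    · -- negative node
      intro hneg
      have hγ' : gammaPCA h r s = ((n - m : ℤ) : ℝ) * h := by rw [hγ]; push_cast; ring
      have hjneg : n - m ≤ 0 := by
        by_contra hc
        push_neg at hc
        have h1 : (1:ℝ) ≤ ((n - m : ℤ) : ℝ) := by exact_mod_cast hc
        rw [hγ'] at hneg
        nlinarith
      have hjge : -(k:ℤ) ≤ n - m := by
        have h1 : -q ≤ ((n - m : ℤ) : ℝ) * h := by rw [← hγ']; exact hγ_ge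
        rw [← hk] at h1
        have h2 : -((k:ℝ)) ≤ ((n - m : ℤ) : ℝ) := by nlinarith
        exact_mod_cast h2
      have hz' := hz_init (n - m) hjge hjneg
      have hx' : x (((n - m : ℤ) : ℝ) * h) = φ (((n - m : ℤ) : ℝ) * h) := by
        apply hx_init
        constructor
        · rw [← hγ']; exact hγ_ge
        · rw [← hγ']; exact hneg.le
      rw [hγ', hz', hx']
  -- error function
  set E : ℝ → ℝ := fun u => x u - z u with hE_def
  have hz0 : z 0 = φ 0 := by
    have := hz_init 0 (by simp) le_rfl
    simpa using this
  have hE0 : E 0 = 0 := by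
    have hx0 : x 0 = φ 0 := hx_init 0 ⟨hq0, le_rfl⟩
    simp [hE_def, hx0, hz0]
  have hEcont : ContinuousOn E (Icc 0 T) :=
    (hx_cont.mono (Icc_subset_Icc hq0 le_rfl)).sub (hz_cont.mono (fun u hu => hu.1))
  -- derivative of E
  set d : ℝ → ℝ := fun s => -(a s) * x (s - r s) - -(a s) * z (gammaPCA h r s) with hd_def
  have hEd : ∀ s ∈ Ico (0:ℝ) T, HasDerivWithinAt E (d s) (Ioi s) s := by
    intro s hs
    exact (((hx_deriv s ⟨hs.1, hs.2.le⟩).sub (hz_deriv s hs)).mono Ioi_subset_Ici_self)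
  -- integrability of d
  have hmeas_zγ : Measurable (fun s : ℝ => z (gammaPCA h r s)) := by
    have hcomp : (fun s : ℝ => z (gammaPCA h r s)) =
        (fun n : ℤ => z (((n:ℝ) - (⌊r ((n:ℝ) * h) / h⌋ : ℝ)) * h)) ∘ (fun s : ℝ => ⌊s / h⌋) := by
      funext s
      simp only [Function.comp_apply, hγ_eq s]
    rw [hcomp]
    exact Measurable.comp (measurable_from_top) ((measurable_id.div_const h).floor)
  have hzγ_bdd : ∀ s ∈ Icc (0:ℝ) T, ‖z (gammaPCA h r s)‖ ≤ max Mz Mx := by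
    intro s hs
    obtain ⟨⟨hg1, hg2⟩, _, hg3⟩ := hγ_facts s hs
    rcases lt_or_ge (gammaPCA h r s) 0 with hneg | hpos
    · rw [hg3 hneg]
      exact (hMx _ ⟨hg1, (hneg.le.trans hT.le)⟩).trans (le_max_right _ _)
    · exact (hMz _ ⟨hpos, hg2.trans hs.2⟩).trans (le_max_left _ _)
  have hd_int : ∀ c ∈ Icc (0:ℝ) T, IntervalIntegrable d volume 0 c := by
    intro c hc
    have hsub : Icc (0:ℝ) c ⊆ Icc 0 T := Icc_subset_Icc le_rfl hc.2
    have hterm1 : IntervalIntegrable (fun s => -(a s) * x (s - r s)) volume 0 c := by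
      apply ContinuousOn.intervalIntegrable
      rw [uIcc_of_le hc.1]
      apply ContinuousOn.mul
      · exact ((ha_cont.mono hsub).neg)
      · apply hx_cont.comp (continuousOn_id.sub (hr_cont.mono hsub))
        intro s hs
        have hrs := hr s (hsub hs)
        have hs' := hsub hs
        exact ⟨by show -q ≤ s - r s; linarith [hrs.2, hs'.1],
               by show s - r s ≤ T; linarith [hrs.1, hs'.2]⟩
    have hterm2 : IntervalIntegrable (fun s => -(a s) * z (gammaPCA h r s)) volume 0 c := by
      rw [intervalIntegrable_iff_integrableOn_Ioc_of_le hc.1]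
      have hint_a : IntegrableOn (fun s => -(a s)) (Ioc 0 c) volume := by
        have hia : IntervalIntegrable (fun s => -(a s)) volume 0 c := by
          apply ContinuousOn.intervalIntegrable
          rw [uIcc_of_le hc.1]
          exact (ha_cont.mono hsub).neg
        rwa [intervalIntegrable_iff_integrableOn_Ioc_of_le hc.1] at hia
      have h2 : IntegrableOn (fun s => z (gammaPCA h r s) * -(a s)) (Ioc 0 c) volume := by
        apply Integrable.bdd_mul (c := max Mz Mx) hint_a
          (hmeas_zγ.aestronglyMeasurable.restrict)
        apply (ae_restrict_iff' measurableSet_Ioc).2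
        apply Filter.Eventually.of_forall
        intro s hs
        exact hzγ_bdd s ⟨hs.1.le, hs.2.trans hc.2⟩
      exact h2.congr_fun (fun s _ => mul_comm _ _) measurableSet_Ioc
    exact hterm1.sub hterm2
  -- the key Gronwall estimate
  have key : ∀ δ : ℝ, 0 < δ → ∀ t ∈ Icc (0:ℝ) T,
      |E t| < (wx + δ) * (Real.exp (F t) - 1) + δ := by
    intro δ hδ
    by_contra hcon
    push_neg at hcon
    obtain ⟨t₁, ht₁, ht₁ge⟩ := hcon
    set B : ℝ → ℝ := fun u => (wx + δ) * (Real.exp (F u) - 1) + δ with hB_def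
    have hBcont : Continuous B := by
      apply Continuous.add _ continuous_const
      exact continuous_const.mul ((Real.continuous_exp.comp hFcont).sub continuous_const)
    have hBmono : Monotone B := by
      intro u v huv
      have hee : Real.exp (F u) ≤ Real.exp (F v) := Real.exp_le_exp.2 (hFmono huv)
      simp only [hB_def]
      nlinarith
    have hB0 : B 0 = δ := by simp [hB_def, hF0]
    have hBpos : ∀ u, 0 ≤ u → δ ≤ B u := by
      intro u hu
      have := hBmono hu
      rwa [hB0] at this
    -- continuous extension of E
    set Ec : ℝ → ℝ := fun u => x (max (-q) (min u T)) - z (max 0 u) with hEc_def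
    have hEc_cont : Continuous Ec := by
      apply Continuous.sub
      · exact hx_cont.comp_continuous
          (continuous_const.max (continuous_id.min continuous_const))
          (fun u => ⟨le_max_left _ _, max_le hqT (min_le_right _ _)⟩)
      · exact hz_cont.comp_continuous (continuous_const.max continuous_id)
          (fun u => Set.mem_Ici.2 (le_max_left _ _))
    have hEc_eq : ∀ u ∈ Icc (0:ℝ) T, Ec u = E u := by
      intro u hu
      simp only [hEc_def, hE_def, min_eq_left hu.2, max_eq_right (hq0.trans hu.1),
        max_eq_right hu.1]
    set S : Set ℝ := Icc 0 T ∩ {u | B u ≤ |Ec u|} with hS_def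
    have hS_closed : IsClosed S :=
      isClosed_Icc.inter (isClosed_le hBcont hEc_cont.abs)
    have hS_cpt : IsCompact S :=
      isCompact_Icc.of_isClosed_subset hS_closed (fun u hu => hu.1)
    have hS_ne : S.Nonempty := ⟨t₁, ht₁, by rw [Set.mem_setOf_eq, hEc_eq t₁ ht₁]; exact ht₁ge⟩
    set t₀ : ℝ := sInf S with ht₀_def
    have ht₀S : t₀ ∈ S := hS_cpt.sInf_mem hS_ne
    have ht₀Icc : t₀ ∈ Icc (0:ℝ) T := ht₀S.1
    have ht₀pos : 0 < t₀ := by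
      rcases ht₀Icc.1.lt_or_eq with h' | h'
      · exact h'
      · exfalso
        have hcontra := ht₀S.2
        rw [Set.mem_setOf_eq, ← h', hEc_eq 0 ⟨le_rfl, hT.le⟩, hE0, hB0] at hcontra
        simp at hcontra
        linarith
    have hlt : ∀ u ∈ Ico (0:ℝ) t₀, |E u| < B u := by
      intro u hu
      by_contra hc
      push_neg at hc
      have huIcc : u ∈ Icc (0:ℝ) T := ⟨hu.1, hu.2.le.trans ht₀Icc.2⟩
      have hmem : u ∈ S := ⟨huIcc, by rw [Set.mem_setOf_eq, hEc_eq u huIcc]; exact hc⟩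
      have := csInf_le hS_cpt.bddBelow hmem
      linarith [hu.2]
    -- FTC
    have hfund : ∫ s in (0:ℝ)..t₀, d s = E t₀ - E 0 := by
      apply intervalIntegral.integral_eq_sub_of_hasDeriv_right_of_le ht₀pos.le
        (hEcont.mono (Icc_subset_Icc le_rfl ht₀Icc.2))
        (fun s hs => hEd s ⟨hs.1.le, hs.2.trans_le ht₀Icc.2⟩)
        (hd_int t₀ ht₀Icc)
    -- bound on the derivative
    set gdom : ℝ → ℝ := fun s => a' s * ((wx + δ) * Real.exp (F s)) with hgdom_def
    have hgdom_cont : Continuous gdom :=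
      ha'_cont.mul (continuous_const.mul (Real.continuous_exp.comp hFcont))
    have hbound : ∀ s ∈ Ioo (0:ℝ) t₀, ‖d s‖ ≤ gdom s := by
      intro s hs
      have hsIcc : s ∈ Icc (0:ℝ) T := ⟨hs.1.le, hs.2.le.trans ht₀Icc.2⟩
      obtain ⟨⟨hg1, hg2⟩, hgdist, hg3⟩ := hγ_facts s hsIcc
      have has : 0 ≤ a s := ha_nonneg s hsIcc
      have hd_eq : d s = -(a s) * (x (s - r s) - z (gammaPCA h r s)) := by
        simp only [hd_def]; ring
      have hdiff : |x (s - r s) - z (gammaPCA h r s)| ≤ wx + B s := by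
        have hstep1 : |x (s - r s) - x (gammaPCA h r s)| ≤ wx := by
          apply hwx_le
          · exact ⟨hg1, hg2.trans hsIcc.2⟩
          · have hrs := hr s hsIcc
            exact ⟨by linarith [hrs.2, hsIcc.1], by linarith [hrs.1, hsIcc.2]⟩
          · have heq : s - r s - gammaPCA h r s = (s - r s) - gammaPCA h r s := by ring
            rwa [heq] at hgdist
        have hstep2 : |x (gammaPCA h r s) - z (gammaPCA h r s)| ≤ B s := by
          rcases lt_or_ge (gammaPCA h r s) 0 with hneg | hpos
          · rw [hg3 hneg]
            simp only [sub_self, abs_zero]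
            linarith [hBpos s hs.1.le]
          · have hγlt : gammaPCA h r s ∈ Ico (0:ℝ) t₀ := ⟨hpos, hg2.trans_lt hs.2⟩
            have hlt' := hlt _ hγlt
            have hmono := hBmono hg2
            have : |E (gammaPCA h r s)| < B s := lt_of_lt_of_le hlt' hmono
            exact this.le
        calc |x (s - r s) - z (gammaPCA h r s)|
            ≤ |x (s - r s) - x (gammaPCA h r s)| + |x (gammaPCA h r s) - z (gammaPCA h r s)| :=
              abs_sub_le _ _ _
          _ ≤ wx + B s := add_le_add hstep1 hstep2
      have hsum : wx + B s = (wx + δ) * Real.exp (F s) := by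
        simp only [hB_def]; ring
      rw [hd_eq]
      rw [Real.norm_eq_abs, abs_mul, abs_neg, abs_of_nonneg has]
      calc a s * |x (s - r s) - z (gammaPCA h r s)| ≤ a s * (wx + B s) :=
            mul_le_mul_of_nonneg_left hdiff has
        _ = gdom s := by simp only [hgdom_def]; rw [hsum, ha'_eq s hsIcc]
    have hae : ∀ᵐ s ∂(volume.restrict (Set.uIoc (0:ℝ) t₀)), ‖d s‖ ≤ gdom s := by
      have h1 : ∀ᵐ (s:ℝ) ∂volume, s ≠ t₀ := by
        rw [MeasureTheory.ae_iff]
        have hset : {s : ℝ | ¬ s ≠ t₀} = {t₀} := by ext s; simp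
        rw [hset]
        exact Real.volume_singleton
      apply (ae_restrict_iff' measurableSet_uIoc).2
      filter_upwards [h1] with s hsne hsmem
      rw [uIoc_of_le ht₀pos.le] at hsmem
      exact hbound s ⟨hsmem.1, lt_of_le_of_ne hsmem.2 hsne⟩
    have hnorm : ‖∫ s in (0:ℝ)..t₀, d s‖ ≤ |∫ s in (0:ℝ)..t₀, gdom s| :=
      intervalIntegral.norm_integral_le_abs_of_norm_le hae (hgdom_cont.intervalIntegrable 0 t₀)
    have hgint : ∫ s in (0:ℝ)..t₀, gdom s = (wx + δ) * (Real.exp (F t₀) - 1) := by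
      have hGd : ∀ u : ℝ, HasDerivAt (fun v => (wx + δ) * Real.exp (F v)) (gdom u) u := by
        intro u
        have hder := ((hFd u).exp).const_mul (wx + δ)
        exact hder.congr_deriv (by show (wx + δ) * (Real.exp (F u) * a' u) = a' u * ((wx + δ) * Real.exp (F u)); ring)
      have hftc := intervalIntegral.integral_eq_sub_of_hasDerivAt
        (f := fun v => (wx + δ) * Real.exp (F v)) (f' := gdom)
        (fun u _ => hGd u) (hgdom_cont.intervalIntegrable 0 t₀)
      rw [hftc]
      simp only [hF0, Real.exp_zero]
      ring
    have hEt₀ : B t₀ ≤ |E t₀| := by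
      have hh2 := ht₀S.2
      rwa [Set.mem_setOf_eq, hEc_eq t₀ ht₀Icc] at hh2
    have hfin : |E t₀| ≤ (wx + δ) * (Real.exp (F t₀) - 1) := by
      have h1 : Real.exp (F t₀) - 1 ≥ 0 := by
        have hFpos : (0:ℝ) ≤ F t₀ := by rw [← hF0]; exact hFmono ht₀pos.le
        have := Real.one_le_exp hFpos
        linarith
      have h2 : |(wx + δ) * (Real.exp (F t₀) - 1)| = (wx + δ) * (Real.exp (F t₀) - 1) := by
        apply abs_of_nonneg; positivity
      calc |E t₀| = ‖∫ s in (0:ℝ)..t₀, d s‖ := by rw [hfund, hE0, sub_zero, Real.norm_eq_abs]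
        _ ≤ |∫ s in (0:ℝ)..t₀, gdom s| := hnorm
        _ = (wx + δ) * (Real.exp (F t₀) - 1) := by rw [hgint, h2]
    simp only [hB_def] at hEt₀
    linarith
  -- conclusion
  intro t ht
  have h1 : |E t| ≤ wx * (Real.exp (F t) - 1) := by
    by_contra hcc
    push_neg at hcc
    set E₀ := Real.exp (F t) with hE₀_def
    have hE₀pos : 0 < E₀ := Real.exp_pos _
    set δ := (|E t| - wx * (E₀ - 1)) / E₀ with hδ_def
    have hδpos : 0 < δ := div_pos (by linarith) hE₀pos
    have hkey := key δ hδpos t ht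
    have hδE : δ * E₀ = |E t| - wx * (E₀ - 1) := by
      rw [hδ_def]; field_simp
    nlinarith
  have hFtle : F t ≤ F T := hFmono ht.2
  have hexple : Real.exp (F t) ≤ Real.exp (F T) := Real.exp_le_exp.2 hFtle
  have hFT_nonneg : 0 ≤ F T := by rw [← hF0]; exact hFmono hT.le
  have hexp_ineq : Real.exp (F T) - 1 ≤ F T * Real.exp (F T) := by
    have e1 : (1 - F T) * Real.exp (F T) ≤ 1 := by
      have hadd := Real.add_one_le_exp (-(F T))
      have hmul := mul_le_mul_of_nonneg_right hadd (Real.exp_pos (F T)).le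
      rw [Real.exp_neg, inv_mul_cancel₀ (Real.exp_ne_zero (F T))] at hmul
      nlinarith
    nlinarith
  calc |x t - z t| = |E t| := rfl
    _ ≤ wx * (Real.exp (F t) - 1) := h1
    _ ≤ wx * (Real.exp (F T) - 1) := by nlinarith
    _ ≤ wx * (F T * Real.exp (F T)) := by nlinarith
    _ = (Real.exp (F T) * F T) * wx := by ring
    _ = (Real.exp (∫ s in (0:ℝ)..T, a s) * ∫ s in (0:ℝ)..T, a s) * wx := by rw [hFA]
end

section
/- Under the hypotheses of the previous approximation estimate, if additionally r is uniformly continuous on [0,T] and x is continuous on [-q,T], then for every T > 0, max_{0 ≤ t ≤ T} |x(φ)(t) - z_h(φ)(t)| → 0 as h → 0. -/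
set_option maxHeartbeats 2000000


/-- Uniform convergence of the piecewise-constant-argument approximations on
any compact interval [0,T] as h → 0 (Theorem 3.2, limit form). -/
theorem compact_interval_convergence
    (T q : ℝ) (hT : 0 < T) (hq : 0 < q)
    (a : ℝ → ℝ) (ha_cont : ContinuousOn a (Set.Icc 0 T))
    (ha_nonneg : ∀ t ∈ Set.Icc (0 : ℝ) T, 0 ≤ a t)
    (r : ℝ → ℝ) (hr_cont : ContinuousOn r (Set.Icc 0 T))
    (hr : ∀ t ∈ Set.Icc (0 : ℝ) T, r t ∈ Set.Icc 0 q)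
    (φ : ℝ → ℝ) (hφ : ContinuousOn φ (Set.Icc (-q) 0))
    (x : ℝ → ℝ)
    (hx_cont : ContinuousOn x (Set.Icc (-q) T))
    (hx_init : ∀ t ∈ Set.Icc (-q) (0 : ℝ), x t = φ t)
    (hx_deriv : ∀ t ∈ Set.Icc (0 : ℝ) T,
      HasDerivWithinAt x (-(a t) * x (t - r t)) (Set.Ici t) t) :
    ∀ ε > (0 : ℝ), ∃ h₀ > (0 : ℝ),
      ∀ (h : ℝ) (k : ℕ) (z : ℝ → ℝ),
        0 < h → h ≤ h₀ → h ≤ q → (k : ℝ) * h = q →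
        ContinuousOn z (Set.Ici 0) →
        (∀ n : ℤ, -(k : ℤ) ≤ n → n ≤ 0 → z ((n : ℝ) * h) = φ ((n : ℝ) * h)) →
        (∀ t ∈ Set.Ico (0 : ℝ) T,
          HasDerivWithinAt z (-(a t) * z (gammaPCA h r t)) (Set.Ici t) t) →
        ∀ t ∈ Set.Icc (0 : ℝ) T, |x t - z t| ≤ ε := by
  intro ε hε
  -- bound on a
  obtain ⟨K₀, hK₀⟩ :=
    (isCompact_Icc : IsCompact (Set.Icc (0:ℝ) T)).exists_bound_of_continuousOn ha_cont
  set K : ℝ := max K₀ 1 with hKdef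
  have hK1 : (1:ℝ) ≤ K := le_max_right _ _
  have hKpos : (0:ℝ) < K := lt_of_lt_of_le one_pos hK1
  have haK : ∀ s ∈ Set.Icc (0:ℝ) T, a s ≤ K := fun s hs =>
    le_trans (le_trans (le_abs_self _) (by simpa using hK₀ s hs)) (le_max_left _ _)
  set c : ℝ := ε / Real.exp (2*K*T) with hc
  have hcpos : 0 < c := div_pos hε (Real.exp_pos _)
  -- uniform continuity of x and r
  have hux := (isCompact_Icc : IsCompact (Set.Icc (-q) T)).uniformContinuousOn_of_continuous hx_cont
  rw [Metric.uniformContinuousOn_iff_le] at hux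
  obtain ⟨δ₁, hδ₁pos, hδ₁⟩ := hux (c/2) (by positivity)
  have hur := (isCompact_Icc : IsCompact (Set.Icc (0:ℝ) T)).uniformContinuousOn_of_continuous hr_cont
  rw [Metric.uniformContinuousOn_iff_le] at hur
  obtain ⟨δ₂, hδ₂pos, hδ₂⟩ := hur (δ₁/2) (by positivity)
  refine ⟨min δ₂ (δ₁/2), by positivity, ?_⟩
  intro h k z hh hhle hhq hkh hz_cont hz_init hz_deriv
  have hhδ₂ : h ≤ δ₂ := le_trans hhle (min_le_left _ _)
  have hhδ₁ : h ≤ δ₁/2 := le_trans hhle (min_le_right _ _)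
  -- key facts about gammaPCA
  have key : ∀ s ∈ Set.Ico (0:ℝ) T,
      gammaPCA h r s ∈ Set.Icc (-q) s ∧ |gammaPCA h r s - (s - r s)| ≤ δ₁ ∧
      (gammaPCA h r s ≤ 0 → z (gammaPCA h r s) = x (gammaPCA h r s)) := by
    intro s hs
    set m : ℤ := ⌊s/h⌋ with hm
    set tn : ℝ := (m:ℝ)*h with htn
    set j : ℤ := ⌊r tn / h⌋ with hj
    have hγ : gammaPCA h r s = ((m - j : ℤ):ℝ) * h := by
      simp only [gammaPCA, ← hm, ← htn, ← hj, Int.floor_sub_intCast]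
    have hm0 : 0 ≤ m := Int.floor_nonneg.2 (div_nonneg hs.1 hh.le)
    have htn_le : tn ≤ s := by
      have h1 : (m:ℝ) ≤ s/h := Int.floor_le _
      rw [htn]; calc (m:ℝ)*h ≤ (s/h)*h := by nlinarith
        _ = s := by field_simp
    have htn_gt : s - h < tn := by
      have h1 : s/h < (m:ℝ) + 1 := Int.lt_floor_add_one _
      have h2 : s < ((m:ℝ)+1)*h := by
        calc s = (s/h)*h := by field_simp
          _ < ((m:ℝ)+1)*h := by nlinarith
      rw [htn]; nlinarith
    have htn0 : 0 ≤ tn := mul_nonneg (by exact_mod_cast hm0) hh.le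
    have htnIcc : tn ∈ Set.Icc (0:ℝ) T := ⟨htn0, le_trans htn_le hs.2.le⟩
    have hrtn := hr tn htnIcc
    have hj0 : 0 ≤ j := Int.floor_nonneg.2 (div_nonneg hrtn.1 hh.le)
    have hjk : j ≤ (k:ℤ) := by
      have h1 : (j:ℝ) ≤ r tn / h := Int.floor_le _
      have h2 : r tn / h ≤ (k:ℝ) := by
        rw [div_le_iff₀ hh]; rw [← hkh] at hrtn; exact hrtn.2
      exact_mod_cast le_trans h1 h2
    have hjle : (j:ℝ)*h ≤ r tn := by
      have h1 : (j:ℝ) ≤ r tn / h := Int.floor_le _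
      calc (j:ℝ)*h ≤ (r tn / h)*h := by nlinarith
        _ = r tn := by field_simp
    have hjgt : r tn - h < (j:ℝ)*h := by
      have h1 : r tn / h < (j:ℝ) + 1 := Int.lt_floor_add_one _
      have h2 : r tn < ((j:ℝ)+1)*h := by
        calc r tn = (r tn/h)*h := by field_simp
          _ < ((j:ℝ)+1)*h := by nlinarith
      nlinarith
    have hcast : ((m - j : ℤ):ℝ) = (m:ℝ) - (j:ℝ) := by push_cast; ring
    have hγval : gammaPCA h r s = (m:ℝ)*h - (j:ℝ)*h := by rw [hγ, hcast]; ring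
    have hγlb : -q ≤ gammaPCA h r s := by
      have h1 : -((k:ℝ)) ≤ (m:ℝ) - (j:ℝ) := by
        have h2 : -(k:ℤ) ≤ m - j := by omega
        have h3 : ((-(k:ℕ):ℤ):ℝ) ≤ ((m - j : ℤ):ℝ) := by exact_mod_cast h2
        push_cast at h3; linarith
      rw [hγval]
      calc -q = -((k:ℝ))*h := by rw [← hkh]; ring
        _ ≤ ((m:ℝ) - (j:ℝ))*h := by nlinarith
        _ = (m:ℝ)*h - (j:ℝ)*h := by ring
    have hγub : gammaPCA h r s ≤ s := by
      rw [hγval]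
      have : (0:ℝ) ≤ (j:ℝ)*h := mul_nonneg (by exact_mod_cast hj0) hh.le
      linarith
    refine ⟨⟨hγlb, hγub⟩, ?_, ?_⟩
    · -- distance estimate
      have h1 : |gammaPCA h r s - (s - r tn)| ≤ h := by
        rw [hγval]
        rw [abs_le]
        constructor <;> nlinarith
      have hsIcc : s ∈ Set.Icc (0:ℝ) T := ⟨hs.1, hs.2.le⟩
      have h2 : |r tn - r s| ≤ δ₁/2 := by
        have := hδ₂ tn htnIcc s hsIcc (by
          rw [Real.dist_eq]; rw [abs_le]; constructor <;> nlinarith)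
        rwa [Real.dist_eq] at this
      calc |gammaPCA h r s - (s - r s)|
          = |(gammaPCA h r s - (s - r tn)) + (r s - r tn)| := by congr 1; ring
        _ ≤ |gammaPCA h r s - (s - r tn)| + |r s - r tn| := abs_add_le _ _
        _ ≤ h + δ₁/2 := add_le_add h1 (by rwa [abs_sub_comm])
        _ ≤ δ₁ := by linarith
    · -- initial segment agreement
      intro hγ0
      have hn0 : m - j ≤ 0 := by
        by_contra hcon
        push_neg at hcon
        have h1 : (1:ℝ) ≤ ((m - j:ℤ):ℝ) := by exact_mod_cast hcon
        rw [hγ] at hγ0; nlinarith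
      have hnk : -(k:ℤ) ≤ m - j := by omega
      have hz := hz_init (m - j) hnk hn0
      have hx := hx_init (gammaPCA h r s) ⟨hγlb, hγ0⟩
      rw [hγ, hz, ← hγ, hx]
  -- the error function
  set e : ℝ → ℝ := fun t => x t - z t with he
  have hz0 : z 0 = φ 0 := by
    have := hz_init 0 (by simp) (le_refl 0)
    simpa using this
  have hx0 : x 0 = φ 0 := hx_init 0 ⟨by linarith, le_rfl⟩
  have he0 : e 0 = 0 := by simp [he, hz0, hx0]
  -- comparison function
  set B : ℝ → ℝ := fun t => c * Real.exp (2*K*t) - c/2 with hB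
  have hBge : ∀ t, 0 ≤ t → c/2 ≤ B t := by
    intro t ht
    have h1 : (1:ℝ) ≤ Real.exp (2*K*t) := Real.one_le_exp (by positivity)
    simp only [hB]; nlinarith
  have hBmono : ∀ u v : ℝ, u ≤ v → B u ≤ B v := by
    intro u v huv
    have : Real.exp (2*K*u) ≤ Real.exp (2*K*v) := Real.exp_le_exp.2 (by nlinarith)
    simp only [hB]; nlinarith
  -- main claim
  have main : ∀ t ∈ Set.Icc (0:ℝ) T, |e t| ≤ B t := by
    by_contra hcon
    push_neg at hcon
    obtain ⟨t₀, ht₀, ht₀'⟩ := hcon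
    set U : Set ℝ := {t | t ∈ Set.Icc (0:ℝ) T ∧ B t < |e t|} with hU
    have hUne : U.Nonempty := ⟨t₀, ht₀, ht₀'⟩
    have hUbdd : BddBelow U := ⟨0, fun u hu => hu.1.1⟩
    set ts : ℝ := sInf U with hts
    have hzcont' : ContinuousOn z (Set.Icc (0:ℝ) T) :=
      hz_cont.mono (fun u hu => hu.1)
    have hecont : ContinuousOn e (Set.Icc (0:ℝ) T) :=
      ((hx_cont.mono (fun u hu => ⟨by linarith [hu.1], hu.2⟩)).sub hzcont')
    have hVclosed : IsClosed {t | t ∈ Set.Icc (0:ℝ) T ∧ B t ≤ |e t|} := by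
      have hf : ContinuousOn (fun t => |e t| - B t) (Set.Icc (0:ℝ) T) := by
        apply ContinuousOn.sub
        · exact hecont.abs
        · exact (Continuous.continuousOn (by continuity))
      have := hf.preimage_isClosed_of_isClosed isClosed_Icc (isClosed_Ici (a := (0:ℝ)))
      convert this using 1
      ext u
      simp only [Set.mem_setOf_eq, Set.mem_inter_iff, Set.mem_preimage, Set.mem_Ici]
      constructor
      · rintro ⟨h1, h2⟩; exact ⟨h1, by linarith⟩
      · rintro ⟨h1, h2⟩; exact ⟨h1, by linarith⟩
    have htsV : ts ∈ Set.Icc (0:ℝ) T ∧ B ts ≤ |e ts| := by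
      have h1 : ts ∈ closure U := csInf_mem_closure hUne hUbdd
      have h2 : closure U ⊆ {t | t ∈ Set.Icc (0:ℝ) T ∧ B t ≤ |e t|} :=
        closure_minimal (fun u hu => ⟨hu.1, hu.2.le⟩) hVclosed
      exact h2 h1
    have hts0 : 0 ≤ ts := htsV.1.1
    have htsT : ts ≤ T := htsV.1.2
    have hbelow : ∀ s, 0 ≤ s → s < ts → |e s| ≤ B s := by
      intro s hs0 hsts
      by_contra hcon2
      push_neg at hcon2
      have : s ∈ U := ⟨⟨hs0, le_trans hsts.le htsT⟩, hcon2⟩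
      exact absurd (csInf_le hUbdd this) (not_le.2 hsts)
    -- Gronwall-type bound on [0, ts]
    set G : ℝ → ℝ := fun t => c/2 * Real.exp (2*K*t) - c/2 with hG
    set G' : ℝ → ℝ := fun t => c*K*Real.exp (2*K*t) with hG'
    have hGderiv : ∀ t : ℝ, HasDerivAt G (G' t) t := by
      intro t
      have h1 : HasDerivAt (fun u : ℝ => 2*K*u) (2*K) t := by
        simpa using (hasDerivAt_id t).const_mul (2*K)
      have h2 := (h1.exp.const_mul (c/2)).sub_const (c/2)
      refine h2.congr_deriv ?_
      simp only [hG']; ring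
    have hfcont : ContinuousOn e (Set.Icc 0 ts) :=
      hecont.mono (Set.Icc_subset_Icc le_rfl htsT)
    have hfderiv : ∀ s ∈ Set.Ico (0:ℝ) ts,
        HasDerivWithinAt e (-(a s) * (x (s - r s) - z (gammaPCA h r s))) (Set.Ici s) s := by
      intro s hsmem
      have hsIco : s ∈ Set.Ico (0:ℝ) T := ⟨hsmem.1, lt_of_lt_of_le hsmem.2 htsT⟩
      have hd := (hx_deriv s ⟨hsIco.1, hsIco.2.le⟩).sub (hz_deriv s hsIco)
      refine hd.congr_deriv ?_
      ring
    have hbound : ∀ s ∈ Set.Ico (0:ℝ) ts,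
        ‖-(a s) * (x (s - r s) - z (gammaPCA h r s))‖ ≤ G' s := by
      intro s hsmem
      have hsIco : s ∈ Set.Ico (0:ℝ) T := ⟨hsmem.1, lt_of_lt_of_le hsmem.2 htsT⟩
      have hsIcc : s ∈ Set.Icc (0:ℝ) T := ⟨hsIco.1, hsIco.2.le⟩
      obtain ⟨hγIcc, hγdist, hγinit⟩ := key s hsIco
      set γ : ℝ := gammaPCA h r s with hγdef
      have hrs := hr s hsIcc
      have hsrmem : s - r s ∈ Set.Icc (-q) T :=
        ⟨by linarith [hsIcc.1, hrs.2], by linarith [hsIcc.2, hrs.1]⟩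
      have hγmem : γ ∈ Set.Icc (-q) T := ⟨hγIcc.1, le_trans hγIcc.2 hsIcc.2⟩
      have h1 : |x (s - r s) - x γ| ≤ c/2 := by
        have := hδ₁ (s - r s) hsrmem γ hγmem (by rw [Real.dist_eq]; rwa [abs_sub_comm])
        rwa [Real.dist_eq] at this
      have h2 : |x γ - z γ| ≤ B s := by
        rcases le_or_gt γ 0 with hγ0 | hγ0
        · rw [hγinit hγ0]
          simp only [sub_self, abs_zero]
          have hb := hBge s hsIcc.1
          have hc2 : (0:ℝ) ≤ c/2 := by positivity
          exact le_trans hc2 hb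
        · have hγlt : γ < ts := lt_of_le_of_lt hγIcc.2 hsmem.2
          have := hbelow γ hγ0.le hγlt
          calc |x γ - z γ| = |e γ| := rfl
            _ ≤ B γ := this
            _ ≤ B s := hBmono _ _ hγIcc.2
      have hD : |x (s - r s) - z γ| ≤ c/2 + B s := by
        calc |x (s - r s) - z γ|
            = |(x (s - r s) - x γ) + (x γ - z γ)| := by congr 1; ring
          _ ≤ |x (s - r s) - x γ| + |x γ - z γ| := abs_add_le _ _
          _ ≤ c/2 + B s := add_le_add h1 h2
      have haKs := haK s hsIcc
      have has := ha_nonneg s hsIcc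
      calc ‖-(a s) * (x (s - r s) - z γ)‖
          = a s * |x (s - r s) - z γ| := by
            rw [Real.norm_eq_abs, abs_mul, abs_neg, abs_of_nonneg has]
        _ ≤ K * (c/2 + B s) := by
            apply mul_le_mul haKs hD (abs_nonneg _) hKpos.le
        _ = G' s := by simp only [hG', hB]; ring
    have hstart : ‖e 0‖ ≤ G 0 := by
      rw [he0]; simp [hG]
    have hfin := image_norm_le_of_norm_deriv_right_le_deriv_boundary
      hfcont hfderiv hstart hGderiv hbound (Set.right_mem_Icc.2 hts0)
    -- contradiction: G ts < B ts ≤ |e ts|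
    rw [Real.norm_eq_abs] at hfin
    have hlt : G ts < B ts := by
      have := Real.exp_pos (2*K*ts)
      simp only [hG, hB]; nlinarith
    linarith [htsV.2]
  -- conclude
  intro t ht
  have h1 := main t ht
  have h2 : B t ≤ ε := by
    have h3 : Real.exp (2*K*t) ≤ Real.exp (2*K*T) := Real.exp_le_exp.2 (by nlinarith [ht.2])
    have h4 : c * Real.exp (2*K*T) = ε := by
      rw [hc]; field_simp
    simp only [hB]; nlinarith [hcpos]
  calc |x t - z t| = |e t| := rfl
    _ ≤ B t := h1
    _ ≤ ε := h2
end

section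
/- For any t ≥ 0, h ∈ (0,q], and uniformly continuous r : [0,∞) → [0,q], the deviated argument satisfies t - γ_h(t,r) ≤ 3q + w_r(q). -/
/-- t - γ_h(t,r) ≤ 3q + w_r(q) for all t ≥ 0 and h ∈ (0,q]. -/
theorem gammaPCA_lag_bound
    (q h : ℝ) (hq : 0 < q) (hh : 0 < h) (hhq : h ≤ q)
    (r : ℝ → ℝ) (hr : ∀ t, 0 ≤ t → r t ∈ Set.Icc 0 q)
    (wr : ℝ → ℝ) (hwr_nonneg : ∀ ℓ, 0 ≤ wr ℓ) (hwr_mono : Monotone wr)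
    (hwr_mod : ∀ ℓ, 0 ≤ ℓ → ∀ t₁ t₂, 0 ≤ t₁ → 0 ≤ t₂ → |t₂ - t₁| ≤ ℓ →
      |r t₂ - r t₁| ≤ wr ℓ) :
    ∀ t, 0 ≤ t → t - gammaPCA h r t ≤ 3 * q + wr q := by
  intro t ht
  set n : ℤ := ⌊t / h⌋ with hn
  set s : ℝ := (n : ℝ) * h with hs
  have hn0 : (0:ℝ) ≤ (n:ℝ) := by
    have : (0:ℤ) ≤ n := by
      rw [hn]; exact Int.floor_nonneg.mpr (div_nonneg ht hh.le)
    exact_mod_cast this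
  have hs0 : 0 ≤ s := mul_nonneg hn0 hh.le
  have hrs := hr s hs0
  set m : ℤ := ⌊r s / h⌋ with hm
  have hfloor : ⌊t / h - (m : ℝ)⌋ = n - m := by
    rw [Int.floor_sub_intCast, hn]
  have hmh : (m : ℝ) * h ≤ r s := by
    have : (m : ℝ) ≤ r s / h := Int.floor_le _
    calc (m:ℝ) * h ≤ (r s / h) * h := by nlinarith
      _ = r s := by field_simp
  have hth : t - (n : ℝ) * h < h := by
    have h1 : t / h - 1 < (n : ℝ) := by
      have := Int.sub_one_lt_floor (t / h)
      rw [← hn] at this; linarith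
    have h2 : t / h < (n : ℝ) + 1 := by linarith
    have h3 := (div_lt_iff₀ hh).mp h2
    nlinarith
  have hgamma : gammaPCA h r t = ((n : ℝ) - (m : ℝ)) * h := by
    unfold gammaPCA
    rw [← hn, ← hs, ← hm, hfloor]
    push_cast; ring
  have hrq : r s ≤ q := hrs.2
  have hw := hwr_nonneg q
  rw [hgamma]
  nlinarith
end

section
/- Under the hypotheses of the main theorem (zero solution of x'(t) = -a(t)x(t-r(t)) uniformly asymptotically stable with exponential estimate, a bounded, r uniformly continuous with values in [0,q]), for each fixed t > 0 the piecewise-constant approximation satisfies |x(t) - z_h([t]_h)| → 0 as h → 0, where [t]_h = [t/h]h. -/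
set_option maxHeartbeats 1000000


/-- Corollary 4.2(1): pointwise convergence of the nodal approximations. -/
theorem pointwise_convergence_nodal
    (q σ K a₀ M₀ : ℝ) (hq : 0 < q) (hσ : 0 < σ) (hK : 0 < K)
    (a : ℝ → ℝ) (ha_nonneg : ∀ t, 0 ≤ t → 0 ≤ a t)
    (ha_bdd : ∀ t, 0 ≤ t → |a t| ≤ a₀)
    (r : ℝ → ℝ) (hr : ∀ t, 0 ≤ t → r t ∈ Set.Icc 0 q)
    (wr : ℝ → ℝ) (hwr_nonneg : ∀ ℓ, 0 ≤ wr ℓ) (hwr_mono : Monotone wr)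
    (hwr_mod : ∀ ℓ, 0 ≤ ℓ → ∀ t₁ t₂, 0 ≤ t₁ → 0 ≤ t₂ → |t₂ - t₁| ≤ ℓ →
      |r t₂ - r t₁| ≤ wr ℓ)
    (hwr_zero : Filter.Tendsto wr (nhdsWithin 0 (Set.Ioi 0)) (nhds 0))
    (U : ℝ → ℝ → (ℝ → ℝ) → ℝ)
    (hU : ∀ (t s : ℝ) (ψ : ℝ → ℝ), s ≤ t →
      |U t s ψ| ≤ K * sSup ((fun θ => |ψ θ|) '' Set.Icc (-q) 0) * Real.exp (-σ * (t - s)))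
    (φ : ℝ → ℝ) (hφ : ContinuousOn φ (Set.Icc (-q) 0))
    (x : ℝ → ℝ) (hx_cont : ContinuousOn x (Set.Ici (-q)))
    (hx_init : ∀ t ∈ Set.Icc (-q) (0 : ℝ), x t = φ t)
    (hx_deriv : ∀ t, 0 ≤ t →
      HasDerivWithinAt x (-(a t) * x (t - r t)) (Set.Ici t) t)
    (hx_bound : ∀ t, 0 ≤ t →
      |x t| ≤ M₀ * sSup ((fun θ => |φ θ|) '' Set.Icc (-q) 0) * Real.exp (-σ * t))
    (zf : ℝ → ℝ → ℝ)
    (hz_cont : ∀ h, 0 < h → h ≤ q → ContinuousOn (zf h) (Set.Ici 0))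
    (hz_init : ∀ h, 0 < h → h ≤ q → ∀ n : ℤ, -(q / h) ≤ (n : ℝ) → (n : ℝ) ≤ 0 →
      zf h ((n : ℝ) * h) = φ ((n : ℝ) * h))
    (hz_deriv : ∀ h, 0 < h → h ≤ q → ∀ t, 0 ≤ t →
      HasDerivWithinAt (zf h) (-(a t) * zf h (gammaPCA h r t)) (Set.Ici t) t) :
    ∀ t, 0 < t →
      Filter.Tendsto (fun h => |x t - zf h ((⌊t / h⌋ : ℝ) * h)|)
        (nhdsWithin 0 (Set.Ioi 0)) (nhds 0) := by
  intro t ht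
  rw [Metric.tendsto_nhdsWithin_nhds]
  intro ε hε
  -- the bound A on |a|
  set A : ℝ := a₀ + 1 with hA_def
  have ha0 : 0 ≤ a₀ := le_trans (abs_nonneg _) (ha_bdd 0 le_rfl)
  have hA1 : (1:ℝ) ≤ A := by rw [hA_def]; linarith
  have hA0 : (0:ℝ) < A := by linarith
  have haA : ∀ u, 0 ≤ u → |a u| ≤ A := fun u hu => le_trans (ha_bdd u hu) (by linarith)
  -- the small epsilon
  have hEpos : (0:ℝ) < Real.exp (A*t) := Real.exp_pos _
  set ε₂ : ℝ := ε / (2 * (Real.exp (A*t) + 1)) with hε₂_def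
  have hε₂ : 0 < ε₂ := by
    apply div_pos hε; nlinarith
  -- continuity of x at t within Ici (-q)
  have htmem : t ∈ Set.Ici (-q) := by simp only [Set.mem_Ici]; linarith
  have hct := hx_cont t htmem
  rw [Metric.continuousWithinAt_iff] at hct
  obtain ⟨δ₁, hδ₁, hδ₁p⟩ := hct (ε/2) (half_pos hε)
  -- uniform continuity of x on Icc (-q) t
  have hKc : IsCompact (Set.Icc (-q) t) := isCompact_Icc
  have huc := hKc.uniformContinuousOn_of_continuous
    (hx_cont.mono Set.Icc_subset_Ici_self)
  rw [Metric.uniformContinuousOn_iff] at huc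
  obtain ⟨δ₂, hδ₂, hδ₂p⟩ := huc ε₂ hε₂
  -- pick h₁ with wr h₁ < δ₂ / 2
  rw [Metric.tendsto_nhdsWithin_nhds] at hwr_zero
  obtain ⟨d, hd, hdp⟩ := hwr_zero (δ₂/2) (half_pos hδ₂)
  set h₁ : ℝ := d/2 with hh₁_def
  have hh₁pos : 0 < h₁ := half_pos hd
  have hwrh₁ : wr h₁ < δ₂/2 := by
    have := hdp (x := h₁) (by simpa [Set.mem_Ioi] using hh₁pos)
      (by rw [Real.dist_eq, sub_zero, abs_of_pos hh₁pos]; rw [hh₁_def]; linarith)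
    rwa [Real.dist_eq, sub_zero, abs_of_nonneg (hwr_nonneg _)] at this
  -- the threshold for h
  refine ⟨min (min q δ₁) (min (δ₂/4) h₁), by positivity, ?_⟩
  intro h hhmem hhdist
  have hh : (0:ℝ) < h := hhmem
  rw [Real.dist_eq, sub_zero, abs_of_pos hh] at hhdist
  have hhq : h ≤ q := le_of_lt (lt_of_lt_of_le hhdist (le_trans (min_le_left _ _) (min_le_left _ _)))
  have hhδ₁ : h < δ₁ := lt_of_lt_of_le hhdist (le_trans (min_le_left _ _) (min_le_right _ _))
  have hhδ₂ : h < δ₂/4 := lt_of_lt_of_le hhdist (le_trans (min_le_right _ _) (min_le_left _ _))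
  have hhh₁ : h ≤ h₁ := le_of_lt (lt_of_lt_of_le hhdist (le_trans (min_le_right _ _) (min_le_right _ _)))
  -- the node [t]_h
  set N : ℤ := ⌊t/h⌋ with hN_def
  set T : ℝ := (N:ℝ) * h with hT_def
  have hN0 : 0 ≤ N := Int.floor_nonneg.2 (by positivity)
  have hT0 : 0 ≤ T := mul_nonneg (by exact_mod_cast hN0) hh.le
  have hTle : T ≤ t := by
    have h1 := Int.floor_le (t/h)
    rw [← hN_def] at h1
    have h2 : (N:ℝ) * h ≤ (t/h) * h := mul_le_mul_of_nonneg_right h1 hh.le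
    rw [div_mul_cancel₀ t hh.ne'] at h2
    rw [hT_def]; exact h2
  have hTgt : t - h < T := by
    have h1 := Int.lt_floor_add_one (t/h)
    rw [← hN_def] at h1
    have h2 : t/h * h < ((N:ℝ)+1) * h := mul_lt_mul_of_pos_right h1 hh
    rw [div_mul_cancel₀ t hh.ne'] at h2
    rw [hT_def]; nlinarith
  -- z agrees with x at nonpositive nodes
  have hznode : ∀ k : ℤ, -q ≤ (k:ℝ)*h → (k:ℝ)*h ≤ 0 → zf h ((k:ℝ)*h) = x ((k:ℝ)*h) := by
    intro k hk1 hk2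
    have hk1' : -(q/h) ≤ (k:ℝ) := by
      rw [← neg_div, div_le_iff₀ hh]
      linarith
    have hk2' : (k:ℝ) ≤ 0 := by nlinarith
    rw [hz_init h hh hhq k hk1' hk2']
    exact (hx_init _ ⟨hk1, hk2⟩).symm
  -- structure of gammaPCA
  have hgam : ∀ u : ℝ, 0 ≤ u → ∃ k : ℤ,
      gammaPCA h r u = (k:ℝ)*h ∧ -q ≤ (k:ℝ)*h ∧ (k:ℝ)*h ≤ (⌊u/h⌋:ℝ)*h ∧
      (⌊u/h⌋:ℝ)*h ≤ u ∧ |(u - r u) - (k:ℝ)*h| ≤ 2*h + wr h := by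
    intro u hu
    set n : ℤ := ⌊u/h⌋ with hn_def
    have hn0 : 0 ≤ n := Int.floor_nonneg.2 (by positivity)
    have hnle : (n:ℝ)*h ≤ u := by
      have h1 := Int.floor_le (u/h)
      rw [← hn_def] at h1
      have h2 : (n:ℝ)*h ≤ (u/h)*h := mul_le_mul_of_nonneg_right h1 hh.le
      rwa [div_mul_cancel₀ u hh.ne'] at h2
    have hngt : u < (n:ℝ)*h + h := by
      have h1 := Int.lt_floor_add_one (u/h)
      rw [← hn_def] at h1
      have h2 : u/h * h < ((n:ℝ)+1) * h := mul_lt_mul_of_pos_right h1 hh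
      rw [div_mul_cancel₀ u hh.ne'] at h2
      nlinarith
    have hnh0 : (0:ℝ) ≤ (n:ℝ)*h := mul_nonneg (by exact_mod_cast hn0) hh.le
    have hrn := hr ((n:ℝ)*h) hnh0
    set m : ℤ := ⌊r ((n:ℝ)*h) / h⌋ with hm_def
    have hm0 : 0 ≤ m := Int.floor_nonneg.2 (div_nonneg hrn.1 hh.le)
    have hm0' : (0:ℝ) ≤ (m:ℝ)*h := mul_nonneg (by exact_mod_cast hm0) hh.le
    have hmle : (m:ℝ)*h ≤ r ((n:ℝ)*h) := by
      have h1 := Int.floor_le (r ((n:ℝ)*h) / h)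
      rw [← hm_def] at h1
      have h2 : (m:ℝ)*h ≤ (r ((n:ℝ)*h)/h)*h := mul_le_mul_of_nonneg_right h1 hh.le
      rwa [div_mul_cancel₀ _ hh.ne'] at h2
    have hmgt : r ((n:ℝ)*h) < (m:ℝ)*h + h := by
      have h1 := Int.lt_floor_add_one (r ((n:ℝ)*h) / h)
      rw [← hm_def] at h1
      have h2 : r ((n:ℝ)*h)/h * h < ((m:ℝ)+1) * h := mul_lt_mul_of_pos_right h1 hh
      rw [div_mul_cancel₀ _ hh.ne'] at h2
      nlinarith
    refine ⟨n - m, ?_, ?_, ?_, hnle, ?_⟩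
    · rw [gammaPCA, ← hn_def, ← hm_def, Int.floor_sub_intCast, ← hn_def]
    · push_cast
      linarith [hrn.2, hmle, hnh0]
    · push_cast
      linarith [hm0']
    · have hru : |r u - r ((n:ℝ)*h)| ≤ wr h := by
        apply hwr_mod h hh.le ((n:ℝ)*h) u hnh0 hu
        rw [abs_of_nonneg (by linarith)]
        linarith
      rw [abs_le] at hru ⊢
      push_cast
      constructor
      · nlinarith [hru.1, hru.2]
      · nlinarith [hru.1, hru.2]
  -- the forcing term is small
  have hforce : ∀ u : ℝ, 0 ≤ u → u < T →
      |x (u - r u) - x (gammaPCA h r u)| ≤ ε₂ := by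
    intro u hu0 huT
    obtain ⟨k, hkeq, hk1, hk2, hk3, hk4⟩ := hgam u hu0
    have hut : u ≤ t := le_of_lt (lt_of_lt_of_le huT hTle)
    have hru := hr u hu0
    have hp1 : u - r u ∈ Set.Icc (-q) t := ⟨by linarith [hru.2], by linarith [hru.1]⟩
    have hp2 : (k:ℝ)*h ∈ Set.Icc (-q) t := ⟨hk1, by linarith⟩
    have hdd : dist (u - r u) ((k:ℝ)*h) < δ₂ := by
      rw [Real.dist_eq]
      have hwm : wr h ≤ wr h₁ := hwr_mono hhh₁
      calc |(u - r u) - (k:ℝ)*h| ≤ 2*h + wr h := hk4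
      _ < δ₂ := by linarith
    have hfin := hδ₂p _ hp1 _ hp2 hdd
    rw [Real.dist_eq] at hfin
    rw [hkeq]
    linarith
  -- the key induction: discrete Gronwall bound
  have key : ∀ n : ℕ, ∀ s : ℝ, 0 ≤ s → s ≤ (n:ℝ)*h → s ≤ T →
      |x s - zf h s| ≤ ε₂ * ((1 + A*h)^n - 1) := by
    intro n
    induction n with
    | zero =>
      intro s hs0 hsn _
      have hs : s = 0 := le_antisymm (by simpa using hsn) hs0
      subst hs
      have h0 : zf h 0 = x 0 := by
        have := hznode 0 (by simp; linarith) (by simp)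
        simpa using this
      rw [h0, sub_self, abs_zero]
      simp
    | succ n ih =>
      intro s hs0 hsn hsT
      push_cast at hsn
      have hQn0 : 0 ≤ ε₂ * ((1 + A*h)^n - 1) := by
        have h1 : (1:ℝ) ≤ (1 + A*h)^n := one_le_pow₀ (by nlinarith)
        nlinarith
      have hmono : ε₂ * ((1 + A*h)^n - 1) ≤ ε₂ * ((1 + A*h)^(n+1) - 1) := by
        rw [pow_succ]
        have h4 : (0:ℝ) ≤ ε₂ * ((1 + A*h)^n * (A*h)) := by positivity
        nlinarith [h4]
      by_cases hcase : s ≤ (n:ℝ)*h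
      · exact le_trans (ih s hs0 hcase hsT) hmono
      · push_neg at hcase
        have hnh0 : (0:ℝ) ≤ (n:ℝ)*h := by positivity
        set Qn : ℝ := ε₂ * ((1 + A*h)^n - 1) with hQn_def
        set f' : ℝ → ℝ :=
          fun u => -(a u) * x (u - r u) - -(a u) * zf h (gammaPCA h r u) with hf'_def
        -- derivative bound on [nh, s)
        have hbound : ∀ u ∈ Set.Ico ((n:ℝ)*h) s, ‖f' u‖ ≤ A * (ε₂ + Qn) := by
          intro u hu
          have hu0 : 0 ≤ u := le_trans hnh0 hu.1
          have huT : u < T := lt_of_lt_of_le hu.2 hsT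
          have hfloor : ⌊u/h⌋ = (n:ℤ) := by
            rw [Int.floor_eq_iff]
            constructor
            · push_cast
              rw [le_div_iff₀ hh]
              exact hu.1
            · rw [div_lt_iff₀ hh]
              push_cast
              calc u < s := hu.2
              _ ≤ (n+1)*h := hsn
              _ = ((n:ℤ):ℝ)*h + h := by push_cast; ring
              _ ≤ _ := by push_cast; nlinarith
          obtain ⟨k, hkeq, hk1, hk2, hk3, hk4⟩ := hgam u hu0
          rw [hfloor] at hk2 hk3
          have hek : |x ((k:ℝ)*h) - zf h ((k:ℝ)*h)| ≤ Qn := by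
            rcases le_or_gt ((k:ℝ)*h) 0 with hle | hgt
            · rw [hznode k hk1 hle, sub_self, abs_zero]
              exact hQn0
            · apply ih ((k:ℝ)*h) hgt.le (by exact_mod_cast hk2)
              have : (k:ℝ)*h ≤ u := le_trans hk2 (by exact_mod_cast hk3)
              linarith
          have hdiff : |x (u - r u) - zf h (gammaPCA h r u)| ≤ ε₂ + Qn := by
            rw [hkeq]
            calc |x (u - r u) - zf h ((k:ℝ)*h)|
                ≤ |x (u - r u) - x ((k:ℝ)*h)| + |x ((k:ℝ)*h) - zf h ((k:ℝ)*h)| :=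
              abs_sub_le _ _ _
            _ ≤ ε₂ + Qn := by
                have := hforce u hu0 huT
                rw [hkeq] at this
                linarith
          have hfac : f' u = (-(a u)) * (x (u - r u) - zf h (gammaPCA h r u)) := by
            rw [hf'_def]; ring
          rw [hfac, Real.norm_eq_abs, abs_mul, abs_neg]
          apply mul_le_mul (haA u hu0) hdiff (abs_nonneg _)
          linarith
        have hsub1 : Set.Icc ((n:ℝ)*h) s ⊆ Set.Ici (-q) :=
          fun v hv => le_trans (by linarith : -q ≤ (n:ℝ)*h) hv.1
        have hsub2 : Set.Icc ((n:ℝ)*h) s ⊆ Set.Ici (0:ℝ) :=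
          fun v hv => le_trans hnh0 hv.1
        have hcont : ContinuousOn (fun u => x u - zf h u) (Set.Icc ((n:ℝ)*h) s) :=
          (hx_cont.mono hsub1).sub ((hz_cont h hh hhq).mono hsub2)
        have hderiv : ∀ u ∈ Set.Ico ((n:ℝ)*h) s,
            HasDerivWithinAt (fun u => x u - zf h u) (f' u) (Set.Ici u) u := by
          intro u hu
          have hu0 : 0 ≤ u := le_trans hnh0 hu.1
          exact (hx_deriv u hu0).sub (hz_deriv h hh hhq u hu0)
        have hmvt := norm_image_sub_le_of_norm_deriv_right_le_segment
          hcont hderiv hbound s (Set.right_mem_Icc.2 hcase.le)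
        rw [Real.norm_eq_abs] at hmvt
        have hen := ih ((n:ℝ)*h) hnh0 le_rfl (le_of_lt (lt_of_lt_of_le hcase hsT))
        have hsnh : s - (n:ℝ)*h ≤ h := by linarith
        have hstep : |x s - zf h s| ≤ Qn + A * (ε₂ + Qn) * h := by
          have h1 : |x s - zf h s| ≤
              |x ((n:ℝ)*h) - zf h ((n:ℝ)*h)| +
              |(x s - zf h s) - (x ((n:ℝ)*h) - zf h ((n:ℝ)*h))| := by
            have habs := abs_add_le (x ((n:ℝ)*h) - zf h ((n:ℝ)*h))
              ((x s - zf h s) - (x ((n:ℝ)*h) - zf h ((n:ℝ)*h)))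
            simpa using habs
          have hC0 : 0 ≤ A * (ε₂ + Qn) := by nlinarith
          have h3 : A * (ε₂ + Qn) * (s - (n:ℝ)*h) ≤ A * (ε₂ + Qn) * h :=
            mul_le_mul_of_nonneg_left hsnh hC0
          linarith
        have hfinal : Qn + A * (ε₂ + Qn) * h = ε₂ * ((1 + A*h)^(n+1) - 1) := by
          rw [hQn_def, pow_succ]; ring
        rw [← hfinal]
        exact hstep
  -- conclude at s = T
  have hNT : ((N.toNat : ℕ):ℝ)*h = T := by
    rw [hT_def]
    congr 1
    exact_mod_cast Int.toNat_of_nonneg hN0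
  have hfinT := key N.toNat T hT0 (le_of_eq hNT.symm) le_rfl
  have hpow : (1 + A*h)^(N.toNat) ≤ Real.exp (A*t) := by
    have h1 : (1 + A*h)^(N.toNat) ≤ (Real.exp (A*h))^(N.toNat) := by
      apply pow_le_pow_left₀ (by nlinarith)
      have := Real.add_one_le_exp (A*h)
      linarith
    have h2 : (Real.exp (A*h))^(N.toNat) = Real.exp (A*T) := by
      rw [← Real.exp_nat_mul]
      congr 1
      rw [← hNT]; ring
    have h3 : Real.exp (A*T) ≤ Real.exp (A*t) := Real.exp_le_exp.2 (by nlinarith)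
    calc (1 + A*h)^(N.toNat) ≤ (Real.exp (A*h))^(N.toNat) := h1
    _ = Real.exp (A*T) := h2
    _ ≤ Real.exp (A*t) := h3
  have hterm2 : |x T - zf h T| < ε/2 := by
    have h1 : |x T - zf h T| ≤ ε₂ * (Real.exp (A*t) - 1) := by
      apply le_trans hfinT
      nlinarith
    have h2 : ε₂ * (Real.exp (A*t) - 1) < ε/2 := by
      rw [hε₂_def]
      rw [div_mul_eq_mul_div, div_lt_iff₀ (by nlinarith : (0:ℝ) < 2 * (Real.exp (A*t) + 1))]
      nlinarith
    linarith
  have hterm1 : |x t - x T| < ε/2 := by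
    have hTmem : T ∈ Set.Ici (-q) := by
      simp only [Set.mem_Ici]; linarith
    have hdT : dist T t < δ₁ := by
      rw [Real.dist_eq, abs_of_nonpos (by linarith)]
      linarith
    have := hδ₁p hTmem hdT
    rw [Real.dist_eq, abs_sub_comm] at this
    exact this
  rw [Real.dist_eq, sub_zero, abs_abs]
  calc |x t - zf h T| ≤ |x t - x T| + |x T - zf h T| := abs_sub_le _ _ _
  _ < ε/2 + ε/2 := add_lt_add hterm1 hterm2
  _ = ε := add_halves ε
end
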